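/- arXiv:2006.03584 — 10 statements merged into one kernel-verified Lean document; each statement's English description precedes it below -/
import Mathlib

section
/- For n ≥ 3, the signed cycle on n vertices in which every edge is negative is a parity signed graph if and only if n is even. -/
/-- A sign assignment on edges: `σ e` means edge `e` is positive. `(G, σ)` is a
*parity signed graph* if there is a bijective labelling `f : V → {1, …, n}`
(`n = |V|`) such that an edge is positive iff its endpoints' labels have the same parity. -/
def IsParitySigned {V : Type*} [Fintype V] (G : SimpleGraph V) (σ : Sym2 V → Prop) : Prop :=
  ∃ f : V → ℕ, Set.BijOn f Set.univ (Set.Icc 1 (Fintype.card V)) ∧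
    ∀ u v : V, G.Adj u v → (σ s(u, v) ↔ f u % 2 = f v % 2)

/-- The endpoints of `e` get labels of opposite parity under `f`. -/
def diffParity {V : Type*} (f : V → ℕ) : Sym2 V → Prop :=
  Sym2.lift ⟨fun u v => f u % 2 ≠ f v % 2, fun _ _ => propext ne_comm⟩

/-- Number of negative edges of `G` under the labelling `f`. -/
noncomputable def negCount {V : Type*} [Fintype V] (G : SimpleGraph V) (f : V → ℕ) : ℕ :=
  {e ∈ G.edgeSet | diffParity f e}.ncard

/-- Number of positive edges of `G` under the labelling `f`. -/
noncomputable def posCount {V : Type*} [Fintype V] (G : SimpleGraph V) (f : V → ℕ) : ℕ :=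
  {e ∈ G.edgeSet | ¬ diffParity f e}.ncard

/-- The *rna* number: the minimum number of negative edges over all bijective
labellings `f : V → {1, …, n}`. -/
noncomputable def rnaNumber {V : Type*} [Fintype V] (G : SimpleGraph V) : ℕ :=
  sInf {k | ∃ f : V → ℕ, Set.BijOn f Set.univ (Set.Icc 1 (Fintype.card V)) ∧ negCount G f = k}

/-- The *adhika* number: the maximum number of positive edges over all bijective
labellings `f : V → {1, …, n}`. -/
noncomputable def adhikaNumber {V : Type*} [Fintype V] (G : SimpleGraph V) : ℕ :=
  sSup {k | ∃ f : V → ℕ, Set.BijOn f Set.univ (Set.Icc 1 (Fintype.card V)) ∧ posCount G f = k}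

/-- The star `K_{1,q}`: center `0`, leaves the `q` nonzero vertices of `Fin (q+1)`. -/
def starGraph (q : ℕ) : SimpleGraph (Fin (q + 1)) :=
  SimpleGraph.fromRel (fun u _ => u = 0)

/-- For `n ≥ 3`, the all-negative signed cycle on `n` vertices is a
parity signed graph iff `n` is even. -/
theorem all_negative_cycle_parity_signed_iff_even (n : ℕ) (hn : 3 ≤ n) :
    IsParitySigned (SimpleGraph.cycleGraph n) (fun _ => False) ↔ Even n := by
  have hnpos : 0 < n := by omega
  haveI : NeZero n := ⟨by omega⟩
  open Fin.NatCast Fin.CommRing in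
  have h1 : (1 : Fin n).val = 1 := by
    rw [← Nat.cast_one (R := Fin n), Fin.val_natCast]
    exact Nat.mod_eq_of_lt (by omega)
  constructor
  · rintro ⟨f, hbij, hadj⟩
    -- each consecutive pair has different parity
    have hstep : ∀ i : Fin n, f (i + 1) % 2 = (f i + 1) % 2 := by
      intro i
      have hA : (SimpleGraph.cycleGraph n).Adj i (i + 1) := by
        rw [SimpleGraph.cycleGraph_adj']
        right
        rw [add_sub_cancel_left, h1]
      have := hadj i (i + 1) hA
      have hne : f i % 2 ≠ f (i + 1) % 2 := fun h => (this.mpr h)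
      omega
    open Fin.NatCast Fin.CommRing in
    have hind : ∀ k : ℕ, f ((k : Fin n)) % 2 = (f 0 + k) % 2 := by
      intro k
      induction k with
      | zero => simp
      | succ k ih =>
        have hc : ((k + 1 : ℕ) : Fin n) = (k : Fin n) + 1 := by push_cast; ring
        rw [hc, hstep]
        omega
    open Fin.NatCast Fin.CommRing in
    have hend := hind n
    open Fin.NatCast Fin.CommRing in
    rw [Fin.natCast_self] at hend
    rw [Nat.even_iff]
    omega
  · intro hev
    rw [Nat.even_iff] at hev
    refine ⟨fun i => i.val + 1, ⟨?_, ?_, ?_⟩, ?_⟩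
    · intro i _
      simp only [Set.mem_Icc, Fintype.card_fin]
      omega
    · intro i _ j _ h
      have h' : (i : ℕ) + 1 = (j : ℕ) + 1 := h
      exact Fin.ext (by omega)
    · intro m hm
      simp only [Set.mem_Icc, Fintype.card_fin] at hm
      exact ⟨⟨m - 1, by omega⟩, Set.mem_univ _, by simp; omega⟩
    · intro u v hA
      simp only [false_iff]
      rw [SimpleGraph.cycleGraph_adj'] at hA
      have key : ∀ a b : Fin n, (b - a).val = 1 → (a.val + 1) % 2 ≠ (b.val + 1) % 2 := by
        intro a b hab
        have hba : b = 1 + a := sub_eq_iff_eq_add.mp (Fin.ext (hab.trans h1.symm))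
        have hbv : b.val = (a.val + 1) % n := by
          rw [hba, Fin.val_add, h1, Nat.add_comm]
        have ha := a.isLt
        rcases Nat.lt_or_ge (a.val + 1) n with h' | h'
        · rw [Nat.mod_eq_of_lt h'] at hbv; omega
        · have h'' : a.val + 1 = n := by omega
          rw [h'', Nat.mod_self] at hbv
          omega
      rcases hA with h | h
      · exact (key v u h).symm
      · exact key u v h
end

section
/- For n ≥ 3, a signed cycle on n vertices having exactly one positive edge (all other n−1 edges negative) is a parity signed graph if and only if n is odd. -/

lemma aux_even_changes (n : ℕ) [NeZero n] (g : Fin n → ZMod 2) :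
    (Finset.univ.filter fun i : Fin n => ¬ g i = g (i + 1)).card % 2 = 0 := by
  have h0 : ∑ i : Fin n, (g (i + 1) - g i) = 0 := by
    rw [Finset.sum_sub_distrib]
    rw [Fintype.sum_equiv (Equiv.addRight (1 : Fin n)) (fun i => g (i + 1)) g (fun i => rfl)]
    exact sub_self _
  have h1 : ∀ i : Fin n, g (i + 1) - g i = if ¬ g i = g (i + 1) then 1 else 0 := by
    intro i
    have : ∀ a b : ZMod 2, b - a = if ¬ a = b then 1 else 0 := by decide
    exact this _ _
  rw [Finset.sum_congr rfl (fun i _ => h1 i), Finset.sum_boole] at h0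
  have := (ZMod.natCast_eq_zero_iff _ 2).mp h0
  omega

lemma aux_edge_inj {m : ℕ} {i j : Fin (m + 3)} (h : s(i, i+1) = s(j, j+1)) : i = j := by
  rw [Sym2.eq_iff] at h
  rcases h with ⟨h1, h2⟩ | ⟨h1, h2⟩
  · exact h1
  · exfalso
    rw [h1] at h2
    rw [add_assoc] at h2
    have h2' : (1 + 1 : Fin (m+3)) = 0 := add_eq_left.mp h2
    norm_num at h2'
    exact (by simp [Fin.ext_iff, Nat.mod_eq_of_lt (show 2 < m + 3 by omega)] : (2 : Fin (m+3)) ≠ 0) h2'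

lemma aux_edge_mem {n : ℕ} (u : Fin (n + 2)) :
    s(u, u + 1) ∈ (SimpleGraph.cycleGraph (n + 2)).edgeSet := by
  rw [SimpleGraph.mem_edgeSet, SimpleGraph.cycleGraph_adj]
  right
  exact add_sub_cancel_left u 1

lemma aux_edge_char {n : ℕ} {e : Sym2 (Fin (n + 2))}
    (he : e ∈ (SimpleGraph.cycleGraph (n + 2)).edgeSet) : ∃ i, e = s(i, i + 1) := by
  induction e with
  | _ u v =>
    rw [SimpleGraph.mem_edgeSet, SimpleGraph.cycleGraph_adj] at he
    rcases he with h | h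
    · exact ⟨v, by rw [Sym2.eq_swap]; rw [sub_eq_iff_eq_add] at h; rw [h, add_comm v 1]⟩
    · exact ⟨u, by rw [sub_eq_iff_eq_add] at h; rw [h, add_comm u 1]⟩

/-- For `n ≥ 3`, a signed cycle on `n` vertices with exactly one
positive edge (all other edges negative) is a parity signed graph iff `n` is odd. -/
theorem one_positive_cycle_parity_signed_iff_odd (n : ℕ) (hn : 3 ≤ n)
    (σ : Sym2 (Fin n) → Prop)
    (hσ : ∃! e : Sym2 (Fin n), e ∈ (SimpleGraph.cycleGraph n).edgeSet ∧ σ e) :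
    IsParitySigned (SimpleGraph.cycleGraph n) σ ↔ Odd n := by
  obtain ⟨m, rfl⟩ : ∃ m, n = m + 3 := ⟨n - 3, by omega⟩
  obtain ⟨e₀, ⟨he₀, hσ₀⟩, huniq⟩ := hσ
  obtain ⟨a, rfl⟩ := aux_edge_char he₀
  have hadj : ∀ u : Fin (m + 3), (SimpleGraph.cycleGraph (m + 3)).Adj u (u + 1) :=
    fun u => (SimpleGraph.mem_edgeSet _).mp (aux_edge_mem u)
  constructor
  · rintro ⟨f, hbij, hf⟩
    have hkey : ∀ i : Fin (m + 3), f i % 2 = f (i + 1) % 2 ↔ i = a := by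
      intro i
      constructor
      · intro h
        have hσi : σ s(i, i + 1) := (hf i (i + 1) (hadj i)).mpr h
        exact aux_edge_inj (huniq s(i, i + 1) ⟨aux_edge_mem i, hσi⟩)
      · rintro rfl
        exact (hf _ _ (hadj _)).mp hσ₀
    have hSeq : (Finset.univ.filter fun i : Fin (m + 3) => f i % 2 = f (i + 1) % 2) = {a} := by
      ext i
      simp [Finset.mem_filter, hkey i]
    have heven := aux_even_changes (m + 3) (fun i => ((f i : ZMod 2)))
    have hfilt : (Finset.univ.filter fun i : Fin (m + 3) =>
        ¬ ((f i : ZMod 2)) = ((f (i + 1) : ZMod 2))) =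
        (Finset.univ.filter fun i : Fin (m + 3) => ¬ f i % 2 = f (i + 1) % 2) := by
      apply Finset.filter_congr
      intro i _
      rw [ZMod.natCast_eq_natCast_iff']
    rw [hfilt] at heven
    have htot := Finset.card_filter_add_card_filter_not
      (s := (Finset.univ : Finset (Fin (m + 3))))
      (p := fun i => f i % 2 = f (i + 1) % 2)
    rw [hSeq] at htot
    simp only [Finset.card_singleton, Finset.card_univ, Fintype.card_fin] at htot
    rw [Nat.odd_iff]
    omega
  · intro hodd
    rw [Nat.odd_iff] at hodd
    set c : Fin (m + 3) := a + 1 with hc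
    refine ⟨fun i => (i - c).val + 1, ?_, ?_⟩
    · rw [Fintype.card_fin]
      refine ⟨?_, ?_, ?_⟩
      · intro i _
        have := (i - c).isLt
        simp only [Set.mem_Icc]
        omega
      · intro i _ j _ h
        have h' : (i - c).val + 1 = (j - c).val + 1 := h
        have hv : (i - c).val = (j - c).val := by omega
        have : i - c = j - c := Fin.val_injective hv
        exact sub_left_inj.mp this
      · intro k hk
        simp only [Set.mem_Icc] at hk
        refine ⟨c + ⟨k - 1, by omega⟩, Set.mem_univ _, ?_⟩
        simp only [add_sub_cancel_left]
        omega
    · have hkey : ∀ u : Fin (m + 3),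
          ((u - c).val + 1) % 2 = ((u + 1 - c).val + 1) % 2 ↔ u = a := by
        intro u
        by_cases hu : u = a
        · rw [hu]
          have h1 : a - c = -1 := by rw [hc]; abel
          have h2 : a + 1 - c = 0 := by rw [hc]; abel
          rw [h1, h2]
          have hneg : ((-1 : Fin (m + 3)) : ℕ) = m + 2 := Fin.coe_neg_one
          simp only [Fin.val_zero, hneg, eq_self_iff_true, iff_true]
          omega
        · have hx : u - c ≠ Fin.last (m + 2) := by
            intro h
            apply hu
            have hl : (Fin.last (m + 2) : Fin (m + 3)) = -1 := by
              rw [Fin.ext_iff, Fin.coe_neg_one, Fin.val_last]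
            rw [hl, sub_eq_iff_eq_add, hc] at h
            rw [h]; abel
          have hstep : u + 1 - c = (u - c) + 1 := by abel
          rw [hstep, Fin.val_add_one, if_neg hx]
          constructor
          · intro h; omega
          · intro h; exact absurd h hu
      intro u v huv
      rw [SimpleGraph.cycleGraph_adj] at huv
      have hone : ∀ w : Fin (m + 3), (σ s(w, w + 1) ↔ w = a) := by
        intro w
        constructor
        · intro h
          exact aux_edge_inj (huniq s(w, w + 1) ⟨aux_edge_mem w, h⟩)
        · rintro rfl
          exact hσ₀
      rcases huv with h | h
      · rw [sub_eq_iff_eq_add] at h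
        subst h
        rw [add_comm 1 v]
        beta_reduce
        rw [Sym2.eq_swap, hone v, ← hkey v]
        exact eq_comm
      · rw [sub_eq_iff_eq_add] at h
        subst h
        rw [add_comm 1 u]
        beta_reduce
        rw [hone u, hkey u]
end

section
/- Let P be a signed path on n ≥ 2 vertices, i.e., vertices v₁, …, v_n, edges e_i = v_i v_{i+1} for 1 ≤ i ≤ n−1, and a sign + or − assigned to each edge. Suppose every maximal run of consecutive negative edges of P has even length (equivalently, P has no odd negative sections). Then P is a parity signed graph if and only if P has no positive edges. -/
/-- A signed path on `n` vertices `v_1, …, v_n`, given by its sign sequence `s`,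
where `s i` means that the edge `e_i = v_i v_{i+1}` (for `1 ≤ i ≤ n-1`) is positive,
is a parity signed graph: there is a bijective labelling `f` of the vertices
`{1, …, n}` by the integers `{1, …, n}` such that each edge is positive iff its
endpoints' labels have the same parity. -/
def PathParitySigned (n : ℕ) (s : ℕ → Prop) : Prop :=
  ∃ f : ℕ → ℕ, Set.BijOn f (Set.Icc 1 n) (Set.Icc 1 n) ∧
    ∀ i : ℕ, 1 ≤ i → i < n → (s i ↔ f i % 2 = f (i + 1) % 2)

/-- `e_a, e_{a+1}, …, e_b` is a maximal run of consecutive negative edges (a negative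
section) of the signed path on `n` vertices with sign sequence `s`. -/
def NegSection (n : ℕ) (s : ℕ → Prop) (a b : ℕ) : Prop :=
  1 ≤ a ∧ a ≤ b ∧ b < n ∧ (∀ i : ℕ, a ≤ i → i ≤ b → ¬ s i) ∧
    (a = 1 ∨ s (a - 1)) ∧ (b = n - 1 ∨ s (b + 1))

private lemma run_parity_aux (n : ℕ) (s : ℕ → Prop) (f : ℕ → ℕ)
    (hedge : ∀ i : ℕ, 1 ≤ i → i < n → (s i ↔ f i % 2 = f (i + 1) % 2)) :
    ∀ k a : ℕ, 1 ≤ a → a + k ≤ n → (∀ m, a ≤ m → m < a + k → ¬ s m) →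
      f (a + k) % 2 = (f a + k) % 2 := by
  intro k
  induction k with
  | zero => simp
  | succ k ih =>
    intro a ha hle hneg
    have h1 := ih a ha (by omega) (fun m hm1 hm2 => hneg m hm1 (by omega))
    have h2 := hedge (a + k) (by omega) (by omega)
    have h3 : ¬ s (a + k) := hneg _ (by omega) (by omega)
    have h4 : ¬ (f (a + k) % 2 = f (a + k + 1) % 2) := fun hh => h3 (h2.mpr hh)
    have h5 : a + (k + 1) = a + k + 1 := by omega
    rw [h5]
    omega

private lemma noninterior_parity_aux (n : ℕ) (s : ℕ → Prop) (f : ℕ → ℕ)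
    (h : ∀ a b : ℕ, NegSection n s a b → Even (b - a + 1))
    (hedge : ∀ i : ℕ, 1 ≤ i → i < n → (s i ↔ f i % 2 = f (i + 1) % 2)) :
    ∀ i : ℕ, 1 ≤ i → i ≤ n → ¬ (2 ≤ i ∧ i ≤ n - 1 ∧ ¬ s (i - 1) ∧ ¬ s i) →
      f i % 2 = f 1 % 2 := by
  intro i
  induction i using Nat.strong_induction_on with
  | _ i ih =>
    intro h1 h2 hni
    rcases eq_or_lt_of_le h1 with h1' | h1'
    · rw [← h1']
    have h2i : 2 ≤ i := h1'
    by_cases hs : s (i - 1)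
    · have hp := ih (i - 1) (by omega) (by omega) (by omega) (fun hc => hc.2.2.2 hs)
      have he := (hedge (i - 1) (by omega) (by omega)).mp hs
      have hr : i - 1 + 1 = i := by omega
      rw [hr] at he
      omega
    · classical
      have hex : ∃ a : ℕ, 1 ≤ a ∧ ∀ m, a ≤ m → m ≤ i - 1 → ¬ s m :=
        ⟨i - 1, by omega, fun m hm1 hm2 => by
          have : m = i - 1 := by omega
          rw [this]; exact hs⟩
      obtain ⟨ha1, haneg⟩ := Nat.find_spec hex
      set a := Nat.find hex with ha_def
      have hai : a ≤ i - 1 := Nat.find_min' hex ⟨by omega, fun m hm1 hm2 => by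
        have : m = i - 1 := by omega
        rw [this]; exact hs⟩
      have hin : i = n ∨ s i := by
        by_cases hsi : s i
        · right; exact hsi
        · left
          have : ¬ (i ≤ n - 1) := fun hh => hni ⟨h2i, hh, hs, hsi⟩
          omega
      have hbound : a = 1 ∨ s (a - 1) := by
        by_cases h1a : a = 1
        · left; exact h1a
        · right
          by_contra hsa
          have hprop : 1 ≤ a - 1 ∧ ∀ m, a - 1 ≤ m → m ≤ i - 1 → ¬ s m := by
            refine ⟨by omega, fun m hm1 hm2 => ?_⟩
            rcases eq_or_lt_of_le hm1 with hm | hm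
            · rw [← hm]; exact hsa
            · exact haneg m (by omega) hm2
          exact Nat.find_min hex (show a - 1 < a by omega) hprop
      have hns : NegSection n s a (i - 1) :=
        ⟨ha1, hai, by omega, fun m hm1 hm2 => haneg m hm1 hm2, hbound, by
          have hr : i - 1 + 1 = i := by omega
          rw [hr]
          rcases hin with hin | hin
          · left; omega
          · right; exact hin⟩
      obtain ⟨t, ht⟩ := h a (i - 1) hns
      have hpa := ih a (by omega) ha1 (by omega) (by
        intro hc
        rcases hbound with hb | hb
        · omega
        · exact hc.2.2.1 hb)
      have halt := run_parity_aux n s f hedge (i - a) a ha1 (by omega)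
        (fun m hm1 hm2 => haneg m hm1 (by omega))
      have hr : a + (i - a) = i := by omega
      rw [hr] at halt
      omega

private lemma cnt_neg_aux : ∀ (n c : ℕ), c < 2 →
    ((Finset.Icc 1 n).filter (fun m => ¬ m % 2 = c)).card = (n + 1 - c) / 2 := by
  intro n c hc
  induction n with
  | zero => simp; omega
  | succ n ihn =>
    have hins : Finset.Icc 1 (n + 1) = insert (n + 1) (Finset.Icc 1 n) := by
      rw [← Finset.insert_Icc_right_eq_Icc_add_one (by omega)]
    rw [hins, Finset.filter_insert]
    by_cases hp : ¬ (n + 1) % 2 = c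
    · rw [if_pos hp, Finset.card_insert_of_notMem (by simp), ihn]
      omega
    · rw [if_neg hp, ihn]
      omega

/-- If every negative section of a signed path on `n ≥ 2` vertices has
even length, then the path is a parity signed graph iff it has no positive edges. -/
theorem path_no_odd_negative_sections (n : ℕ) (hn : 2 ≤ n) (s : ℕ → Prop)
    (h : ∀ a b : ℕ, NegSection n s a b → Even (b - a + 1)) :
    PathParitySigned n s ↔ ∀ i : ℕ, 1 ≤ i → i < n → ¬ s i := by
  constructor
  · rintro ⟨f, hf, hedge⟩ j hj1 hjn
    intro hsj
    classical
    set c := f 1 % 2 with hc_def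
    have hc2 : c < 2 := Nat.mod_lt _ (by omega)
    set Fs := (Finset.Icc 1 n).filter (fun i => ¬ f i % 2 = c) with hFs_def
    set Us := (Finset.Icc 1 n).filter (fun i => f i % 2 = c) with hUs_def
    have hkey := noninterior_parity_aux n s f h hedge
    have h1U : (1 : ℕ) ∈ Us := by
      simp only [hUs_def, Finset.mem_filter, Finset.mem_Icc]
      exact ⟨⟨le_refl 1, by omega⟩, by trivial⟩
    have hj1U : j + 1 ∈ Us := by
      simp only [hUs_def, Finset.mem_filter, Finset.mem_Icc]
      refine ⟨⟨by omega, by omega⟩, ?_⟩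
      refine hkey (j + 1) (by omega) (by omega) ?_
      intro hc
      have hns : ¬ s (j + 1 - 1) := hc.2.2.1
      have : j + 1 - 1 = j := by omega
      rw [this] at hns
      exact hns hsj
    have hinterior : ∀ i ∈ Fs, 2 ≤ i ∧ i ≤ n - 1 ∧ ¬ s (i - 1) ∧ ¬ s i := by
      intro i hi
      simp only [hFs_def, Finset.mem_filter, Finset.mem_Icc] at hi
      by_contra hcon
      exact hi.2 (hkey i hi.1.1 hi.1.2 hcon)
    have hmaps : ∀ i ∈ Fs, i + 1 ∈ Us \ {1, j + 1} := by
      intro i hi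
      obtain ⟨hi2, hin1, hsi1, hsi⟩ := hinterior i hi
      simp only [hFs_def, Finset.mem_filter, Finset.mem_Icc] at hi
      have hne : ¬ (f i % 2 = f (i + 1) % 2) := fun hh =>
        hsi ((hedge i (by omega) (by omega)).mpr hh)
      have hfi1 : f (i + 1) % 2 = c := by omega
      have hiU : i + 1 ∈ Us := by
        simp only [hUs_def, Finset.mem_filter, Finset.mem_Icc]
        exact ⟨⟨by omega, by omega⟩, hfi1⟩
      simp only [Finset.mem_sdiff, Finset.mem_insert, Finset.mem_singleton]
      refine ⟨hiU, ?_⟩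
      push_neg
      constructor
      · omega
      · intro hij
        have : i = j := by omega
        rw [this] at hsi
        exact hsi hsj
    have hcard1 : Fs.card ≤ (Us \ {1, j + 1}).card :=
      Finset.card_le_card_of_injOn (fun i => i + 1) hmaps
        (fun a _ b _ hab => by have hab' : a + 1 = b + 1 := hab; omega)
    have hsub : ({1, j + 1} : Finset ℕ) ⊆ Us := by
      intro x hx
      simp only [Finset.mem_insert, Finset.mem_singleton] at hx
      rcases hx with hx | hx <;> rw [hx]
      · exact h1U
      · exact hj1U
    have hpair : ({1, j + 1} : Finset ℕ).card = 2 := by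
      rw [Finset.card_insert_of_notMem (by simp; omega), Finset.card_singleton]
    have hcard2 : (Us \ {1, j + 1}).card = Us.card - 2 := by
      rw [Finset.card_sdiff_of_subset hsub, hpair]
    have hUs2 : 2 ≤ Us.card := by
      calc 2 = ({1, j + 1} : Finset ℕ).card := hpair.symm
        _ ≤ Us.card := Finset.card_le_card hsub
    have hsum : Us.card + Fs.card = n := by
      have := Finset.card_filter_add_card_filter_not
        (s := Finset.Icc 1 n) (p := fun i => f i % 2 = c)
      rw [Nat.card_Icc] at this
      simpa [hUs_def, hFs_def] using this
    have hFcard : Fs.card = ((Finset.Icc 1 n).filter (fun m => ¬ m % 2 = c)).card := by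
      refine Finset.card_bij (fun i _ => f i) ?_ ?_ ?_
      · intro a ha
        simp only [hFs_def, Finset.mem_filter, Finset.mem_Icc] at ha ⊢
        have := hf.1 (show a ∈ Set.Icc 1 n by exact Set.mem_Icc.mpr ⟨ha.1.1, ha.1.2⟩)
        rw [Set.mem_Icc] at this
        exact ⟨this, ha.2⟩
      · intro a ha b hb hab
        simp only [hFs_def, Finset.mem_filter, Finset.mem_Icc] at ha hb
        exact hf.2.1 (Set.mem_Icc.mpr ha.1) (Set.mem_Icc.mpr hb.1) hab
      · intro b hb
        simp only [Finset.mem_filter, Finset.mem_Icc] at hb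
        obtain ⟨a, haI, hfa⟩ := hf.2.2 (Set.mem_Icc.mpr hb.1)
        rw [Set.mem_Icc] at haI
        refine ⟨a, ?_, hfa⟩
        simp only [hFs_def, Finset.mem_filter, Finset.mem_Icc]
        rw [hfa]
        exact ⟨haI, hb.2⟩
    have hcnt := cnt_neg_aux n c hc2
    rw [hcnt] at hFcard
    omega
  · intro hall
    refine ⟨fun i => i, Set.bijOn_id _, fun i h1 h2 => ?_⟩
    constructor
    · intro hsi
      exact absurd hsi (hall i h1 h2)
    · intro he
      have he' : i % 2 = (i + 1) % 2 := he
      omega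
end

section
/- Let G be a finite connected simple graph on n vertices. There exists a bijection f : V(G) → {1, 2, …, n} such that for every edge uv of G the labels f(u) and f(v) have opposite parity, if and only if G is bipartite with a bipartition V(G) = A ∪ B (every edge joining A to B) satisfying ||A| − |B|| ≤ 1. -/
lemma odd_count_Icc (n : ℕ) :
    ((Finset.Icc 1 n).filter (fun k => k % 2 = 1)).card = (n + 1) / 2 := by
  induction n with
  | zero => simp
  | succ n ih =>
      have h : Finset.Icc 1 (n + 1) = insert (n + 1) (Finset.Icc 1 n) := by
        ext k; simp only [Finset.mem_Icc, Finset.mem_insert]; omega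
      rw [h, Finset.filter_insert]
      by_cases hp : (n + 1) % 2 = 1
      · rw [if_pos hp, Finset.card_insert_of_notMem (by simp), ih]; omega
      · rw [if_neg hp, ih]; omega

lemma construct_label {V : Type*} [Fintype V] [DecidableEq V] (G : SimpleGraph V)
    (A : Finset V) (hA : ∀ u v : V, G.Adj u v → ((u ∈ A) ↔ (v ∉ A)))
    (h1 : Aᶜ.card ≤ A.card) (h2 : A.card ≤ Aᶜ.card + 1) :
    ∃ f : V → ℕ, Set.BijOn f Set.univ (Set.Icc 1 (Fintype.card V)) ∧
        ∀ u v : V, G.Adj u v → f u % 2 ≠ f v % 2 := by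
  classical
  set a := A.card
  set b := Aᶜ.card
  have hn : a + b = Fintype.card V := A.card_add_card_compl
  set f : V → ℕ := fun v =>
    if h : v ∈ A then 2 * (A.equivFin ⟨v, h⟩ : ℕ) + 1
    else 2 * (Aᶜ.equivFin ⟨v, by simpa using h⟩ : ℕ) + 2 with hf
  have hpar : ∀ v : V, (v ∈ A → f v % 2 = 1) ∧ (v ∉ A → f v % 2 = 0) := by
    intro v
    constructor <;> intro h <;> simp [hf, h] <;> omega
  have hmem : ∀ v : V, f v ∈ Finset.Icc 1 (Fintype.card V) := by
    intro v
    by_cases h : v ∈ A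
    · have := (A.equivFin ⟨v, h⟩).2
      simp only [hf, dif_pos h, Finset.mem_Icc]
      omega
    · have := (Aᶜ.equivFin ⟨v, by simpa using h⟩).2
      simp only [hf, dif_neg h, Finset.mem_Icc]
      omega
  have hinj : Function.Injective f := by
    intro u v huv
    by_cases hu : u ∈ A <;> by_cases hv : v ∈ A
    · simp only [hf, dif_pos hu, dif_pos hv] at huv
      have : A.equivFin ⟨u, hu⟩ = A.equivFin ⟨v, hv⟩ := by
        apply Fin.ext; omega
      have := A.equivFin.injective this
      simpa using congrArg Subtype.val this
    · exfalso; simp only [hf, dif_pos hu, dif_neg hv] at huv; omega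
    · exfalso; simp only [hf, dif_neg hu, dif_pos hv] at huv; omega
    · simp only [hf, dif_neg hu, dif_neg hv] at huv
      have : Aᶜ.equivFin ⟨u, by simpa using hu⟩ = Aᶜ.equivFin ⟨v, by simpa using hv⟩ := by
        apply Fin.ext; omega
      have := Aᶜ.equivFin.injective this
      simpa using congrArg Subtype.val this
  have himg : (Finset.univ : Finset V).image f = Finset.Icc 1 (Fintype.card V) := by
    apply Finset.eq_of_subset_of_card_le
    · intro k hk
      simp only [Finset.mem_image] at hk
      obtain ⟨v, -, rfl⟩ := hk
      exact hmem v
    · rw [Finset.card_image_of_injective _ hinj]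
      simp
  refine ⟨f, ?_, ?_⟩
  · have : Set.Icc 1 (Fintype.card V) = f '' Set.univ := by
      rw [← Finset.coe_Icc, ← himg, Finset.coe_image, Finset.coe_univ]
    rw [this]
    exact (hinj.injOn).bijOn_image
  · intro u v huv
    rcases hA u v huv with hiff
    by_cases hu : u ∈ A
    · have hv : v ∉ A := hiff.mp hu
      rw [(hpar u).1 hu, (hpar v).2 hv]; omega
    · have hv : v ∈ A := by by_contra hv; exact hu (hiff.mpr hv)
      rw [(hpar u).2 hu, (hpar v).1 hv]; omega

/-- A connected graph `G` admits a bijective labelling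
`f : V → {1, …, n}` under which every edge joins labels of opposite parity iff `G` is
bipartite with a bipartition `(A, Aᶜ)` (every edge joins `A` to `Aᶜ`) whose parts have
sizes differing by at most `1`. -/
theorem all_negative_parity_signed_iff_balanced_bipartition {V : Type*} [Fintype V]
    [DecidableEq V] (G : SimpleGraph V) (hG : G.Connected) :
    (∃ f : V → ℕ, Set.BijOn f Set.univ (Set.Icc 1 (Fintype.card V)) ∧
        ∀ u v : V, G.Adj u v → f u % 2 ≠ f v % 2) ↔
      ∃ A : Finset V, (∀ u v : V, G.Adj u v → ((u ∈ A) ↔ (v ∉ A))) ∧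
        |(A.card : ℤ) - (Aᶜ.card : ℤ)| ≤ 1 := by
  constructor
  · rintro ⟨f, hbij, hopp⟩
    set n := Fintype.card V
    refine ⟨Finset.univ.filter (fun v => f v % 2 = 1), ?_, ?_⟩
    · intro u v huv
      have := hopp u v huv
      simp only [Finset.mem_filter, Finset.mem_univ, true_and]
      omega
    · set A := Finset.univ.filter (fun v => f v % 2 = 1) with hAdef
      have hinj : Function.Injective f := Set.injOn_univ.mp hbij.injOn
      have himg : A.image f = (Finset.Icc 1 n).filter (fun k => k % 2 = 1) := by
        ext k
        simp only [Finset.mem_image, Finset.mem_filter, Finset.mem_univ, true_and,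
          Finset.mem_Icc, hAdef]
        constructor
        · rintro ⟨v, hv, rfl⟩
          have := hbij.mapsTo (Set.mem_univ v)
          simp only [Set.mem_Icc] at this
          exact ⟨⟨this.1, this.2⟩, hv⟩
        · rintro ⟨hk, hpar⟩
          obtain ⟨v, -, rfl⟩ := hbij.surjOn (by simpa [Set.mem_Icc] using hk)
          exact ⟨v, hpar, rfl⟩
      have hcardA : A.card = (n + 1) / 2 := by
        rw [← Finset.card_image_of_injective A hinj, himg, odd_count_Icc]
      have hcompl : A.card + Aᶜ.card = n := A.card_add_card_compl
      rw [abs_le]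
      constructor <;> omega
  · rintro ⟨A, hA, habs⟩
    rw [abs_le] at habs
    rcases le_or_gt Aᶜ.card A.card with h | h
    · exact construct_label G A hA h (by omega)
    · have hA' : ∀ u v : V, G.Adj u v → ((u ∈ Aᶜ) ↔ (v ∉ Aᶜ)) := by
        intro u v huv
        have := hA u v huv
        simp only [Finset.mem_compl]
        tauto
      have hc : Aᶜᶜ.card = A.card := by rw [compl_compl]
      exact construct_label G Aᶜ hA' (by omega) (by omega)
end

section
/- Let S be the signed star K_{1,m+n} with one central vertex joined to m + n leaves, where exactly m of the edges are assigned sign + and exactly n of the edges are assigned sign −. Then S is a parity signed graph if and only if: (i) n = m or n = m + 2, when m + n is even; or (ii) n = m or n = m + 1, when m + n is odd. -/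
lemma star_adj {q : ℕ} {u v : Fin (q+1)} :
    (starGraph q).Adj u v ↔ u ≠ v ∧ (u = 0 ∨ v = 0) := by
  simp [starGraph, SimpleGraph.fromRel_adj]


lemma mk_zero_inj {q : ℕ} : Function.Injective (fun v : Fin (q+1) => s(0, v)) := by
  intro a b h
  simp only [Sym2.eq, Sym2.rel_iff', Prod.mk.injEq, Prod.swap_prod_mk] at h
  rcases h with ⟨_, h⟩ | ⟨h1, h2⟩
  · exact h
  · exact h2.trans h1


lemma count_parity (N r : ℕ) (hr : r < 2) :
    ((Finset.Icc 1 N).filter (fun x => x % 2 = r)).card = (N + r) / 2 := by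
  induction N with
  | zero => simp; omega
  | succ N ih =>
    rw [← Finset.insert_Icc_right_eq_Icc_add_one (by omega), Finset.filter_insert]
    by_cases h : (N+1) % 2 = r
    · rw [if_pos h, Finset.card_insert_of_notMem (by simp), ih]; omega
    · rw [if_neg h, ih]; omega


lemma filter_ne_and (N c : ℕ) (p : ℕ → Prop) [DecidablePred p] :
    (Finset.Icc 1 N).filter (fun x => x ≠ c ∧ p x) = ((Finset.Icc 1 N).filter p).erase c := by
  ext x; simp only [Finset.mem_erase, Finset.mem_filter]; tauto

lemma cardLp (N c : ℕ) (hc : c ∈ Finset.Icc 1 N) :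
    (((Finset.Icc 1 N).filter (fun x => x % 2 = c % 2)).erase c).card = (N + c % 2) / 2 - 1 := by
  have hcm : c ∈ (Finset.Icc 1 N).filter (fun x => x % 2 = c % 2) :=
    Finset.mem_filter.mpr ⟨hc, rfl⟩
  rw [Finset.card_erase_of_mem hcm,
    count_parity N (c % 2) (Nat.mod_lt _ (by norm_num))]

lemma cardLn (N c : ℕ) :
    ((Finset.Icc 1 N).filter (fun x => ¬ x % 2 = c % 2)).card = N - (N + c % 2) / 2 := by
  have h := Finset.card_filter_add_card_filter_not
    (s := Finset.Icc 1 N) (p := fun x => x % 2 = c % 2)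
  rw [count_parity N (c % 2) (Nat.mod_lt _ (by norm_num)), Nat.card_Icc] at h
  omega

lemma filter_ne_and_not (N c : ℕ) :
    (Finset.Icc 1 N).filter (fun x => x ≠ c ∧ ¬ x % 2 = c % 2)
      = (Finset.Icc 1 N).filter (fun x => ¬ x % 2 = c % 2) := by
  ext x; simp only [Finset.mem_filter]; constructor
  · rintro ⟨h1, _, h2⟩; exact ⟨h1, h2⟩
  · rintro ⟨h1, h2⟩; exact ⟨h1, fun hx => h2 (by rw [hx]), h2⟩

lemma ncard_setOf {α : Type*} [Fintype α] (p : α → Prop) [DecidablePred p] :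
    {x | p x}.ncard = (Finset.univ.filter p).card := by
  rw [← Set.ncard_coe_finset]; congr 1; ext; simp


lemma setcount {q : ℕ} (f : Fin (q+1) → ℕ)
    (hf : Set.BijOn f Set.univ (Set.Icc 1 (q+1))) (Q : ℕ → Prop) [DecidablePred Q] :
    {v : Fin (q+1) | v ≠ 0 ∧ Q (f v)}.ncard
      = ((Finset.Icc 1 (q+1)).filter (fun x => x ≠ f 0 ∧ Q x)).card := by

  rw [← Set.ncard_coe_finset]
  have himg : f '' {v : Fin (q+1) | v ≠ 0 ∧ Q (f v)}
      = ↑((Finset.Icc 1 (q+1)).filter (fun x => x ≠ f 0 ∧ Q x)) := by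
    ext x
    simp only [Set.mem_image, Set.mem_setOf_eq, Finset.coe_filter, Finset.mem_Icc]
    constructor
    · rintro ⟨v, ⟨hv, hQ⟩, rfl⟩
      have hm := hf.mapsTo (Set.mem_univ v)
      rw [Set.mem_Icc] at hm
      exact ⟨hm, fun h => hv (hf.injOn (Set.mem_univ v) (Set.mem_univ 0) h), hQ⟩
    · rintro ⟨hx, hxc, hQ⟩
      obtain ⟨v, -, rfl⟩ := hf.surjOn (Set.mem_Icc.mpr hx)
      exact ⟨v, ⟨fun h0 => hxc (by rw [h0]), hQ⟩, rfl⟩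
  rw [← himg, Set.ncard_image_of_injOn (hf.injOn.mono (Set.subset_univ _))]

lemma edge_count {q : ℕ} (τ : Sym2 (Fin (q+1)) → Prop) :
    {e ∈ (starGraph q).edgeSet | τ e}.ncard = {v : Fin (q+1) | v ≠ 0 ∧ τ s(0, v)}.ncard := by
  have h : {e ∈ (starGraph q).edgeSet | τ e}
      = (fun v => s(0, v)) '' {v : Fin (q+1) | v ≠ 0 ∧ τ s(0, v)} := by
    apply Set.Subset.antisymm
    · intro e he
      induction e with
      | h u v =>
        obtain ⟨he, hτ⟩ := he
        rw [SimpleGraph.mem_edgeSet, star_adj] at he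
        obtain ⟨hne, h0 | h0⟩ := he
        · subst h0; exact ⟨v, ⟨fun hv => hne hv.symm, hτ⟩, rfl⟩
        · subst h0
          exact ⟨u, ⟨hne, by rwa [Sym2.eq_swap]⟩, Sym2.eq_swap⟩
    · rintro e ⟨w, ⟨hw, hτ⟩, rfl⟩
      exact ⟨((starGraph q).mem_edgeSet).mpr (star_adj.mpr ⟨fun h => hw h.symm, Or.inl rfl⟩), hτ⟩
  rw [h, Set.ncard_image_of_injective _ mk_zero_inj]

lemma construct {q : ℕ} (σ : Sym2 (Fin (q+1)) → Prop) (c : ℕ)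
    (hc : c ∈ Finset.Icc 1 (q+1))
    (hS : {v : Fin (q+1) | v ≠ 0 ∧ σ s(0, v)}.ncard
        = (((Finset.Icc 1 (q+1)).filter (fun x => x % 2 = c % 2)).erase c).card)
    (hT : {v : Fin (q+1) | v ≠ 0 ∧ ¬ σ s(0, v)}.ncard
        = ((Finset.Icc 1 (q+1)).filter (fun x => ¬ x % 2 = c % 2)).card) :
    IsParitySigned (starGraph q) σ := by
  classical
  set Lp := ((Finset.Icc 1 (q+1)).filter (fun x => x % 2 = c % 2)).erase c with hLpdef
  set Ln := (Finset.Icc 1 (q+1)).filter (fun x => ¬ x % 2 = c % 2) with hLndef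
  set Sf : Finset (Fin (q+1)) := Finset.univ.filter (fun v => v ≠ 0 ∧ σ s(0, v)) with hSfdef
  set Tf : Finset (Fin (q+1)) := Finset.univ.filter (fun v => v ≠ 0 ∧ ¬ σ s(0, v)) with hTfdef
  have mem1 : ∀ v : Fin (q+1), v ≠ 0 → σ s(0, v) → v ∈ Sf := by
    intro v hv h; simp [hSfdef, hv, h]
  have mem2 : ∀ v : Fin (q+1), v ≠ 0 → ¬ σ s(0, v) → v ∈ Tf := by
    intro v hv h; simp [hTfdef, hv, h]
  have hScard : Sf.card = Lp.card := by
    rw [← hS, ncard_setOf]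
  have hTcard : Tf.card = Ln.card := by
    rw [← hT, ncard_setOf]
  let e1 : ↥Sf ≃ ↥Lp := Finset.equivOfCardEq hScard
  let e2 : ↥Tf ≃ ↥Ln := Finset.equivOfCardEq hTcard
  let f : Fin (q+1) → ℕ := fun v =>
    if hv : v = 0 then c
    else if h : σ s(0, v) then (e1 ⟨v, mem1 v hv h⟩ : ℕ) else (e2 ⟨v, mem2 v hv h⟩ : ℕ)
  have f0 : f 0 = c := dif_pos rfl
  have fS : ∀ (v : Fin (q+1)) (hv : v ≠ 0) (h : σ s(0, v)),
      f v = (e1 ⟨v, mem1 v hv h⟩ : ℕ) := by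
    intro v hv h; show dite _ _ _ = _; rw [dif_neg hv, dif_pos h]
  have fT : ∀ (v : Fin (q+1)) (hv : v ≠ 0) (h : ¬ σ s(0, v)),
      f v = (e2 ⟨v, mem2 v hv h⟩ : ℕ) := by
    intro v hv h; show dite _ _ _ = _; rw [dif_neg hv, dif_neg h]
  have fSmem : ∀ (v : Fin (q+1)), v ≠ 0 → σ s(0, v) → f v ∈ Lp := by
    intro v hv h; rw [fS v hv h]; exact (e1 ⟨v, mem1 v hv h⟩).2
  have fTmem : ∀ (v : Fin (q+1)), v ≠ 0 → ¬ σ s(0, v) → f v ∈ Ln := by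
    intro v hv h; rw [fT v hv h]; exact (e2 ⟨v, mem2 v hv h⟩).2
  -- properties of Lp / Ln elements
  have hLpP : ∀ x ∈ Lp, (1 ≤ x ∧ x ≤ q+1) ∧ x ≠ c ∧ x % 2 = c % 2 := by
    intro x hx
    simp only [hLpdef, Finset.mem_erase, Finset.mem_filter, Finset.mem_Icc] at hx
    tauto
  have hLnP : ∀ x ∈ Ln, (1 ≤ x ∧ x ≤ q+1) ∧ ¬ x % 2 = c % 2 := by
    intro x hx
    simp only [hLndef, Finset.mem_filter, Finset.mem_Icc] at hx
    tauto
  have hcIcc : 1 ≤ c ∧ c ≤ q+1 := Finset.mem_Icc.mp hc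
  -- trichotomy for values of f
  have key : ∀ v : Fin (q+1),
      (v = 0 ∧ f v = c) ∨ (v ≠ 0 ∧ σ s(0, v) ∧ f v ∈ Lp) ∨ (v ≠ 0 ∧ ¬ σ s(0, v) ∧ f v ∈ Ln) := by
    intro v
    by_cases hv : v = 0
    · exact Or.inl ⟨hv, by rw [hv]; exact f0⟩
    · by_cases h : σ s(0, v)
      · exact Or.inr (Or.inl ⟨hv, h, fSmem v hv h⟩)
      · exact Or.inr (Or.inr ⟨hv, h, fTmem v hv h⟩)
  refine ⟨f, ?_, ?_⟩
  · rw [Fintype.card_fin]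
    refine ⟨?_, ?_, ?_⟩
    · -- MapsTo
      intro v _
      rcases key v with ⟨_, hfv⟩ | ⟨_, _, hfv⟩ | ⟨_, _, hfv⟩
      · rw [hfv]; exact Set.mem_Icc.mpr hcIcc
      · exact Set.mem_Icc.mpr (hLpP _ hfv).1
      · exact Set.mem_Icc.mpr (hLnP _ hfv).1
    · -- InjOn
      intro a _ b _ hab
      have disj1 : ∀ x, x ∈ Lp → x = c → False := fun x hx he => (hLpP x hx).2.1 he
      have disj2 : ∀ x, x ∈ Ln → x = c → False := fun x hx he => (hLnP x hx).2 (by rw [he])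
      have disj3 : ∀ x, x ∈ Lp → x ∈ Ln → False := fun x h1 h2 => (hLnP x h2).2 (hLpP x h1).2.2
      rcases key a with ⟨ha0, hfa⟩ | ⟨ha0, hσa, hfa⟩ | ⟨ha0, hσa, hfa⟩ <;>
        rcases key b with ⟨hb0, hfb⟩ | ⟨hb0, hσb, hfb⟩ | ⟨hb0, hσb, hfb⟩
      · rw [ha0, hb0]
      · exact (disj1 (f b) hfb (by rw [← hab, hfa])).elim
      · exact (disj2 (f b) hfb (by rw [← hab, hfa])).elim
      · exact (disj1 (f a) hfa (by rw [hab, hfb])).elim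
      · rw [fS a ha0 hσa, fS b hb0 hσb] at hab
        have := e1.injective (Subtype.ext hab)
        exact congrArg Subtype.val this
      · exact (disj3 (f a) hfa (by rw [hab]; exact hfb)).elim
      · exact (disj2 (f a) hfa (by rw [hab, hfb])).elim
      · exact (disj3 (f b) hfb (by rw [← hab]; exact hfa)).elim
      · rw [fT a ha0 hσa, fT b hb0 hσb] at hab
        have := e2.injective (Subtype.ext hab)
        exact congrArg Subtype.val this
    · -- SurjOn
      intro x hx
      rw [Set.mem_Icc] at hx
      by_cases hxc : x = c
      · exact ⟨0, Set.mem_univ _, by rw [f0, hxc]⟩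
      · by_cases hp : x % 2 = c % 2
        · have hxLp : x ∈ Lp := by
            simp only [hLpdef, Finset.mem_erase, Finset.mem_filter, Finset.mem_Icc]
            exact ⟨hxc, ⟨hx.1, hx.2⟩, hp⟩
          refine ⟨(e1.symm ⟨x, hxLp⟩ : ↥Sf), Set.mem_univ _, ?_⟩
          have hw : ((e1.symm ⟨x, hxLp⟩ : ↥Sf) : Fin (q+1)) ∈ Finset.univ ∧
              ((e1.symm ⟨x, hxLp⟩ : ↥Sf) : Fin (q+1)) ≠ 0 ∧ σ s(0, ((e1.symm ⟨x, hxLp⟩ : ↥Sf) : Fin (q+1))) :=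
            Finset.mem_filter.mp (e1.symm ⟨x, hxLp⟩).2
          have h1 : (⟨((e1.symm ⟨x, hxLp⟩ : ↥Sf) : Fin (q+1)), mem1 _ hw.2.1 hw.2.2⟩ : ↥Sf)
              = e1.symm ⟨x, hxLp⟩ := Subtype.ext rfl
          calc f ((e1.symm ⟨x, hxLp⟩ : ↥Sf) : Fin (q+1))
              = ((e1 ⟨((e1.symm ⟨x, hxLp⟩ : ↥Sf) : Fin (q+1)), mem1 _ hw.2.1 hw.2.2⟩ : ↥Lp) : ℕ) :=
                fS _ hw.2.1 hw.2.2
            _ = ((e1 (e1.symm ⟨x, hxLp⟩) : ↥Lp) : ℕ) := congrArg (fun z => ((e1 z : ↥Lp) : ℕ)) h1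
            _ = ((⟨x, hxLp⟩ : ↥Lp) : ℕ) := congrArg (fun z => ((z : ↥Lp) : ℕ)) (e1.apply_symm_apply ⟨x, hxLp⟩)
            _ = x := rfl
        · have hxLn : x ∈ Ln := by
            simp only [hLndef, Finset.mem_filter, Finset.mem_Icc]
            exact ⟨⟨hx.1, hx.2⟩, hp⟩
          refine ⟨(e2.symm ⟨x, hxLn⟩ : ↥Tf), Set.mem_univ _, ?_⟩
          have hw : ((e2.symm ⟨x, hxLn⟩ : ↥Tf) : Fin (q+1)) ∈ Finset.univ ∧
              ((e2.symm ⟨x, hxLn⟩ : ↥Tf) : Fin (q+1)) ≠ 0 ∧ ¬ σ s(0, ((e2.symm ⟨x, hxLn⟩ : ↥Tf) : Fin (q+1))) :=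
            Finset.mem_filter.mp (e2.symm ⟨x, hxLn⟩).2
          have h1 : (⟨((e2.symm ⟨x, hxLn⟩ : ↥Tf) : Fin (q+1)), mem2 _ hw.2.1 hw.2.2⟩ : ↥Tf)
              = e2.symm ⟨x, hxLn⟩ := Subtype.ext rfl
          calc f ((e2.symm ⟨x, hxLn⟩ : ↥Tf) : Fin (q+1))
              = ((e2 ⟨((e2.symm ⟨x, hxLn⟩ : ↥Tf) : Fin (q+1)), mem2 _ hw.2.1 hw.2.2⟩ : ↥Ln) : ℕ) :=
                fT _ hw.2.1 hw.2.2
            _ = ((e2 (e2.symm ⟨x, hxLn⟩) : ↥Ln) : ℕ) := congrArg (fun z => ((e2 z : ↥Ln) : ℕ)) h1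
            _ = ((⟨x, hxLn⟩ : ↥Ln) : ℕ) := congrArg (fun z => ((z : ↥Ln) : ℕ)) (e2.apply_symm_apply ⟨x, hxLn⟩)
            _ = x := rfl
  · -- sign condition
    intro u v hadj
    rw [star_adj] at hadj
    obtain ⟨hne, h0 | h0⟩ := hadj
    · subst h0
      have hv0 : v ≠ 0 := fun h => hne h.symm
      rw [f0]
      by_cases h : σ s(0, v)
      · have := (hLpP _ (fSmem v hv0 h)).2.2
        simp [h, this.symm]
      · have := (hLnP _ (fTmem v hv0 h)).2
        simp only [h, false_iff]
        exact fun hcontra => this hcontra.symm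
    · subst h0
      have hu0 : u ≠ 0 := hne
      have hswap : s(u, (0 : Fin (q+1))) = s(0, u) := Sym2.eq_swap
      rw [hswap, f0]
      by_cases h : σ s(0, u)
      · have := (hLpP _ (fSmem u hu0 h)).2.2
        simp [h, this]
      · have := (hLnP _ (fTmem u hu0 h)).2
        simp only [h, false_iff]
        exact this

/-- A signed star `K_{1,m+n}` with exactly `m` positive and exactly `n`
negative edges is a parity signed graph iff: `n = m` or `n = m + 2` when `m + n` is
even, or `n = m` or `n = m + 1` when `m + n` is odd. -/
theorem signed_star_parity_signed_iff (m n : ℕ) (σ : Sym2 (Fin (m + n + 1)) → Prop)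
    (hpos : {e ∈ (starGraph (m + n)).edgeSet | σ e}.ncard = m)
    (hneg : {e ∈ (starGraph (m + n)).edgeSet | ¬ σ e}.ncard = n) :
    IsParitySigned (starGraph (m + n)) σ ↔
      (Even (m + n) ∧ (n = m ∨ n = m + 2)) ∨ (Odd (m + n) ∧ (n = m ∨ n = m + 1)) := by
  classical
  constructor
  · rintro ⟨f, hbij, hσ⟩
    rw [Fintype.card_fin] at hbij
    have hc : 1 ≤ f 0 ∧ f 0 ≤ m + n + 1 := Set.mem_Icc.mp (hbij.mapsTo (Set.mem_univ 0))
    have hsetP : {v : Fin (m + n + 1) | v ≠ 0 ∧ σ s(0, v)}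
        = {v : Fin (m + n + 1) | v ≠ 0 ∧ f v % 2 = f 0 % 2} := by
      ext v
      simp only [Set.mem_setOf_eq, and_congr_right_iff]
      intro hv
      rw [hσ 0 v (star_adj.mpr ⟨fun h => hv h.symm, Or.inl rfl⟩)]
      exact eq_comm
    have hsetN : {v : Fin (m + n + 1) | v ≠ 0 ∧ ¬ σ s(0, v)}
        = {v : Fin (m + n + 1) | v ≠ 0 ∧ ¬ f v % 2 = f 0 % 2} := by
      ext v
      simp only [Set.mem_setOf_eq, and_congr_right_iff]
      intro hv
      rw [hσ 0 v (star_adj.mpr ⟨fun h => hv h.symm, Or.inl rfl⟩)]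
      exact not_congr eq_comm
    have e1 : {e ∈ (starGraph (m + n)).edgeSet | σ e}.ncard
        = ((Finset.Icc 1 (m + n + 1)).filter (fun x => x ≠ f 0 ∧ x % 2 = f 0 % 2)).card := by
      rw [edge_count, hsetP]
      exact setcount f hbij (fun x => x % 2 = f 0 % 2)
    rw [hpos, filter_ne_and, cardLp _ _ (Finset.mem_Icc.mpr hc)] at e1
    have e2 : {e ∈ (starGraph (m + n)).edgeSet | ¬ σ e}.ncard
        = ((Finset.Icc 1 (m + n + 1)).filter (fun x => x ≠ f 0 ∧ ¬ x % 2 = f 0 % 2)).card := by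
      rw [edge_count, hsetN]
      exact setcount f hbij (fun x => ¬ x % 2 = f 0 % 2)
    rw [hneg, filter_ne_and_not, cardLn] at e2
    have hr : f 0 % 2 < 2 := Nat.mod_lt _ (by norm_num)
    simp only [Nat.even_iff, Nat.odd_iff]
    omega
  · intro h
    have hS0 : {v : Fin (m + n + 1) | v ≠ 0 ∧ σ s(0, v)}.ncard = m :=
      (edge_count σ).symm.trans hpos
    have hT0 : {v : Fin (m + n + 1) | v ≠ 0 ∧ ¬ σ s(0, v)}.ncard = n :=
      (edge_count (fun e => ¬ σ e)).symm.trans hneg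
    rcases h with ⟨hev, h1 | h1⟩ | ⟨hodd, h1 | h1⟩
    · refine construct σ 1 (Finset.mem_Icc.mpr (by omega)) ?_ ?_
      · rw [hS0, cardLp _ 1 (Finset.mem_Icc.mpr (by omega))]
        rw [Nat.even_iff] at hev
        omega
      · rw [hT0, cardLn]
        rw [Nat.even_iff] at hev
        omega
    · refine construct σ 2 (Finset.mem_Icc.mpr (by omega)) ?_ ?_
      · rw [hS0, cardLp _ 2 (Finset.mem_Icc.mpr (by omega))]
        omega
      · rw [hT0, cardLn]
        omega
    · rw [Nat.odd_iff] at hodd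
      omega
    · refine construct σ 1 (Finset.mem_Icc.mpr (by omega)) ?_ ?_
      · rw [hS0, cardLp _ 1 (Finset.mem_Icc.mpr (by omega))]
        omega
      · rw [hT0, cardLn]
        omega
end

section
/- Let B⁺(m, n) be the signed bistar consisting of adjacent vertices u and v, m pendant vertices adjacent to u, and n pendant vertices adjacent to v, where the edge uv is positive, all m pendant edges at u are positive, and all n pendant edges at v are negative. Then B⁺(m, n) is a parity signed graph if and only if: n = m + 1 or n = m + 3, when m + n is odd; or n = m + 2, when m + n is even. -/
/-- The bistar `B(m, n)`: adjacent centres `u = Sum.inl 0` and `v = Sum.inr 0`, with the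
`m` pendant vertices `Sum.inl k` (`k ≠ 0`) adjacent to `u` and the `n` pendant vertices
`Sum.inr k` (`k ≠ 0`) adjacent to `v`. -/
def bistar (m n : ℕ) : SimpleGraph (Fin (m + 1) ⊕ Fin (n + 1)) :=
  SimpleGraph.fromRel (fun a b =>
    (a = Sum.inl 0 ∧ (∃ k : Fin (m + 1), b = Sum.inl k)) ∨
    (a = Sum.inr 0 ∧ (∃ k : Fin (n + 1), b = Sum.inr k)) ∨
    (a = Sum.inl 0 ∧ b = Sum.inr 0))

/-- The signs of `B⁺(m, n)`: the centre edge `uv` and the pendant edges at `u` are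
positive (these are exactly the edges meeting the `u`-side), and the pendant edges at
`v` are negative. -/
def bplusSign (m n : ℕ) : Sym2 (Fin (m + 1) ⊕ Fin (n + 1)) → Prop :=
  fun e => ∃ k : Fin (m + 1), (Sum.inl k : Fin (m + 1) ⊕ Fin (n + 1)) ∈ e


section Aux

lemma oddIccCard (N : ℕ) :
    ((Finset.Icc 1 N).filter (fun a => a % 2 = 1)).card = (N + 1) / 2 := by
  induction N with
  | zero => simp
  | succ N ih =>
    rw [← Finset.insert_Icc_right_eq_Icc_add_one (by omega : 1 ≤ N + 1), Finset.filter_insert]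
    by_cases h : (N + 1) % 2 = 1
    · rw [if_pos h, Finset.card_insert_of_notMem (by simp), ih]; omega
    · rw [if_neg h, ih]; omega

lemma card_odd_labels {V : Type*} [Fintype V] [DecidableEq V] (f : V → ℕ)
    (hf : Set.BijOn f Set.univ (Set.Icc 1 (Fintype.card V))) :
    (Finset.univ.filter (fun x => f x % 2 = 1)).card = (Fintype.card V + 1) / 2 := by
  rw [← oddIccCard (Fintype.card V)]
  apply Finset.card_bij (fun x _ => f x)
  · intro a ha
    simp only [Finset.mem_filter, Finset.mem_univ, true_and] at ha
    have h2 := hf.mapsTo (Set.mem_univ a)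
    simp only [Set.mem_Icc] at h2
    simp only [Finset.mem_filter, Finset.mem_Icc]
    exact ⟨h2, ha⟩
  · intro a _ b _ hab
    exact hf.injOn (Set.mem_univ a) (Set.mem_univ b) hab
  · intro b hb
    simp only [Finset.mem_filter, Finset.mem_Icc] at hb
    obtain ⟨x, -, hx⟩ := hf.surjOn (Set.mem_Icc.mpr hb.1)
    refine ⟨x, ?_, hx⟩
    simp only [Finset.mem_filter, Finset.mem_univ, true_and, hx]
    exact hb.2

lemma cardV (m n : ℕ) : Fintype.card (Fin (m + 1) ⊕ Fin (n + 1)) = m + n + 2 := by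
  simp only [Fintype.card_sum, Fintype.card_fin]; omega

lemma bplus_helper (m n : ℕ) (f : Fin (m + 1) ⊕ Fin (n + 1) → ℕ)
    (hbij : Set.BijOn f Set.univ (Set.Icc 1 (m + n + 2)))
    (h1 : ∀ k : Fin (m + 1), f (Sum.inl k) % 2 = f (Sum.inl 0) % 2)
    (h2 : f (Sum.inr 0) % 2 = f (Sum.inl 0) % 2)
    (h3 : ∀ k : Fin (n + 1), k ≠ 0 → f (Sum.inr k) % 2 ≠ f (Sum.inl 0) % 2) :
    IsParitySigned (bistar m n) (bplusSign m n) := by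
  refine ⟨f, by rwa [cardV], ?_⟩
  intro u v hadj
  simp only [bistar, SimpleGraph.fromRel_adj] at hadj
  obtain ⟨hne, hrel⟩ := hadj
  rcases u with a | a <;> rcases v with b | b
  · exact iff_of_true ⟨a, by simp⟩ ((h1 a).trans (h1 b).symm)
  · have hab : a = 0 ∧ b = 0 := by
      simpa using hrel
    obtain ⟨rfl, rfl⟩ := hab
    exact iff_of_true ⟨0, by simp⟩ h2.symm
  · have hab : a = 0 ∧ b = 0 := by
      have := hrel
      simp at this
      tauto
    obtain ⟨rfl, rfl⟩ := hab
    exact iff_of_true ⟨0, by simp⟩ h2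
  · have hab : a = 0 ∨ b = 0 := by
      simp at hrel
      tauto
    have hne' : a ≠ b := fun h => hne (by rw [h])
    refine iff_of_false (by simp [bplusSign]) ?_
    rcases hab with rfl | rfl
    · intro h
      exact h3 b (fun hb => hne' hb.symm) (h ▸ h2)
    · intro h
      exact h3 a hne' (h.symm ▸ h2)

end Aux


section Fwd

lemma bplus_forward (m n : ℕ)
    (h : IsParitySigned (bistar m n) (bplusSign m n)) :
    n = m + 1 ∨ n = m + 2 ∨ n = m + 3 := by
  obtain ⟨f, hbij, hp⟩ := h
  have hcardodd := card_odd_labels f hbij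
  rw [cardV] at hbij hcardodd
  -- adjacency of the centre edge
  have adj_c : (bistar m n).Adj (Sum.inl 0) (Sum.inr 0) := by
    simp [bistar, SimpleGraph.fromRel_adj]
  have hc : f (Sum.inr 0) % 2 = f (Sum.inl 0) % 2 :=
    ((hp _ _ adj_c).mp ⟨0, by simp⟩).symm
  have hl : ∀ k : Fin (m + 1), f (Sum.inl k) % 2 = f (Sum.inl 0) % 2 := by
    intro k
    by_cases hk : k = 0
    · rw [hk]
    · have adj : (bistar m n).Adj (Sum.inl 0) (Sum.inl k) := by
        simp [bistar, SimpleGraph.fromRel_adj, Ne.symm hk]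
      exact ((hp _ _ adj).mp ⟨0, by simp⟩).symm
  have hr : ∀ k : Fin (n + 1), k ≠ 0 → f (Sum.inr k) % 2 ≠ f (Sum.inl 0) % 2 := by
    intro k hk h
    have adj : (bistar m n).Adj (Sum.inr 0) (Sum.inr k) := by
      simp [bistar, SimpleGraph.fromRel_adj, Ne.symm hk]
    have hnsign : ¬ bplusSign m n s(Sum.inr (0 : Fin (n+1)), Sum.inr k) := by
      simp [bplusSign]
    exact hnsign ((hp _ _ adj).mpr (hc.trans h.symm))
  -- the parity class of the centre
  have hU : (Finset.univ.filter
      (fun x : Fin (m+1) ⊕ Fin (n+1) => f x % 2 = f (Sum.inl 0) % 2))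
      = Finset.disjSum Finset.univ {0} := by
    ext x
    rcases x with k | k
    · simp [hl k]
    · simp only [Finset.mem_filter, Finset.mem_univ, true_and,
        Finset.inr_mem_disjSum, Finset.mem_singleton]
      constructor
      · intro h
        by_contra hk
        exact hr k hk h
      · rintro rfl
        exact hc
  have hUcard : (Finset.univ.filter
      (fun x : Fin (m+1) ⊕ Fin (n+1) => f x % 2 = f (Sum.inl 0) % 2)).card = m + 2 := by
    rw [hU, Finset.card_disjSum]
    simp
  rcases Nat.mod_two_eq_zero_or_one (f (Sum.inl 0)) with hp0 | hp1
  · -- centre class is even, so odd class is the complement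
    have hsplit := Finset.card_filter_add_card_filter_not
      (s := (Finset.univ : Finset (Fin (m+1) ⊕ Fin (n+1))))
      (p := fun x => f x % 2 = f (Sum.inl 0) % 2)
    have hcompl : (Finset.univ.filter
        (fun x : Fin (m+1) ⊕ Fin (n+1) => ¬ (f x % 2 = f (Sum.inl 0) % 2)))
        = Finset.univ.filter (fun x => f x % 2 = 1) := by
      apply Finset.filter_congr
      intro x _
      rw [hp0]
      constructor
      · intro h; omega
      · intro h; omega
    rw [hUcard, hcompl, hcardodd, Finset.card_univ, cardV] at hsplit
    omega
  · have : (Finset.univ.filter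
        (fun x : Fin (m+1) ⊕ Fin (n+1) => f x % 2 = f (Sum.inl 0) % 2))
        = Finset.univ.filter (fun x => f x % 2 = 1) := by rw [hp1]
    rw [this, hcardodd] at hUcard
    omega

end Fwd


section Bwd

def fA (m n : ℕ) : Fin (m + 1) ⊕ Fin (n + 1) → ℕ
  | Sum.inl k => 2 * k.val + 1
  | Sum.inr k => if k.val = 0 then 2 * m + 3 else 2 * k.val

lemma caseA (m n : ℕ) (hn : n = m + 1 ∨ n = m + 2) :
    IsParitySigned (bistar m n) (bplusSign m n) := by
  apply bplus_helper m n (fA m n)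
  · refine ⟨?_, ?_, ?_⟩
    · rintro (k | k) -
      · have := k.isLt
        simp only [fA, Set.mem_Icc]
        omega
      · have := k.isLt
        simp only [fA, Set.mem_Icc]
        split_ifs <;> omega
    · rintro (a | a) - (b | b) - h
      · have h' : 2 * a.val + 1 = 2 * b.val + 1 := h
        exact congrArg Sum.inl (Fin.ext (by omega))
      · have ha := a.isLt
        have h' : 2 * a.val + 1 = if b.val = 0 then 2 * m + 3 else 2 * b.val := h
        split_ifs at h' <;> omega
      · have hb := b.isLt
        have h' : (if a.val = 0 then 2 * m + 3 else 2 * a.val) = 2 * b.val + 1 := h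
        split_ifs at h' <;> omega
      · have h' : (if a.val = 0 then 2 * m + 3 else 2 * a.val)
            = if b.val = 0 then 2 * m + 3 else 2 * b.val := h
        split_ifs at h' with h1 h2 h2 <;>
          exact congrArg Sum.inr (Fin.ext (by omega))
    · intro a ha
      simp only [Set.mem_Icc] at ha
      rcases Nat.mod_two_eq_zero_or_one a with h | h
      · refine ⟨Sum.inr ⟨a / 2, by omega⟩, Set.mem_univ _, ?_⟩
        show (if a / 2 = 0 then 2 * m + 3 else 2 * (a / 2)) = a
        rw [if_neg (by omega)]
        omega
      · by_cases h2 : a = 2 * m + 3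
        · refine ⟨Sum.inr 0, Set.mem_univ _, ?_⟩
          show (if (0 : Fin (n+1)).val = 0 then 2 * m + 3 else 2 * (0 : Fin (n+1)).val) = a
          rw [if_pos (by simp)]
          omega
        · refine ⟨Sum.inl ⟨a / 2, by omega⟩, Set.mem_univ _, ?_⟩
          show 2 * (a / 2) + 1 = a
          omega
  · intro k
    show (2 * k.val + 1) % 2 = (2 * (0 : Fin (m+1)).val + 1) % 2
    omega
  · show (if (0 : Fin (n+1)).val = 0 then 2 * m + 3 else 2 * (0 : Fin (n+1)).val) % 2
        = (2 * (0 : Fin (m+1)).val + 1) % 2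
    rw [if_pos (by simp)]
    omega
  · intro k hk
    have hk' : k.val ≠ 0 := fun h => hk (Fin.ext h)
    show (if k.val = 0 then 2 * m + 3 else 2 * k.val) % 2
        ≠ (2 * (0 : Fin (m+1)).val + 1) % 2
    rw [if_neg hk']
    omega

def fB (m n : ℕ) : Fin (m + 1) ⊕ Fin (n + 1) → ℕ
  | Sum.inl k => 2 * k.val + 2
  | Sum.inr k => if k.val = 0 then 2 * m + 4 else 2 * k.val - 1

lemma caseB (m : ℕ) :
    IsParitySigned (bistar m (m + 3)) (bplusSign m (m + 3)) := by
  apply bplus_helper m (m + 3) (fB m (m + 3))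
  · refine ⟨?_, ?_, ?_⟩
    · rintro (k | k) -
      · have := k.isLt
        simp only [fB, Set.mem_Icc]
        omega
      · have := k.isLt
        simp only [fB, Set.mem_Icc]
        split_ifs <;> omega
    · rintro (a | a) - (b | b) - h
      · have h' : 2 * a.val + 2 = 2 * b.val + 2 := h
        exact congrArg Sum.inl (Fin.ext (by omega))
      · have ha := a.isLt
        have h' : 2 * a.val + 2 = if b.val = 0 then 2 * m + 4 else 2 * b.val - 1 := h
        split_ifs at h' <;> omega
      · have hb := b.isLt
        have h' : (if a.val = 0 then 2 * m + 4 else 2 * a.val - 1) = 2 * b.val + 2 := h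
        split_ifs at h' <;> omega
      · have h' : (if a.val = 0 then 2 * m + 4 else 2 * a.val - 1)
            = if b.val = 0 then 2 * m + 4 else 2 * b.val - 1 := h
        split_ifs at h' with h1 h2 h2 <;>
          exact congrArg Sum.inr (Fin.ext (by omega))
    · intro a ha
      simp only [Set.mem_Icc] at ha
      rcases Nat.mod_two_eq_zero_or_one a with h | h
      · by_cases h2 : a = 2 * m + 4
        · refine ⟨Sum.inr 0, Set.mem_univ _, ?_⟩
          show (if (0 : Fin (m+3+1)).val = 0 then 2 * m + 4 else 2 * (0 : Fin (m+3+1)).val - 1) = a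
          rw [if_pos (by simp)]
          omega
        · refine ⟨Sum.inl ⟨a / 2 - 1, by omega⟩, Set.mem_univ _, ?_⟩
          show 2 * (a / 2 - 1) + 2 = a
          omega
      · refine ⟨Sum.inr ⟨(a + 1) / 2, by omega⟩, Set.mem_univ _, ?_⟩
        show (if (a + 1) / 2 = 0 then 2 * m + 4 else 2 * ((a + 1) / 2) - 1) = a
        rw [if_neg (by omega)]
        omega
  · intro k
    show (2 * k.val + 2) % 2 = (2 * (0 : Fin (m+1)).val + 2) % 2
    omega
  · show (if (0 : Fin (m+3+1)).val = 0 then 2 * m + 4 else 2 * (0 : Fin (m+3+1)).val - 1) % 2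
        = (2 * (0 : Fin (m+1)).val + 2) % 2
    rw [if_pos (by simp)]
    omega
  · intro k hk
    have hk' : k.val ≠ 0 := fun h => hk (Fin.ext h)
    show (if k.val = 0 then 2 * m + 4 else 2 * k.val - 1) % 2
        ≠ (2 * (0 : Fin (m+1)).val + 2) % 2
    rw [if_neg hk']
    omega

end Bwd

/-- The signed bistar `B⁺(m, n)` (edge `uv` positive, the `m` pendant
edges at `u` positive, the `n` pendant edges at `v` negative) is a parity signed graph
iff `n = m + 1` or `n = m + 3` when `m + n` is odd, or `n = m + 2` when `m + n` is
even. -/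
theorem bistar_bplus_parity_signed_iff (m n : ℕ) :
    IsParitySigned (bistar m n) (bplusSign m n) ↔
      (Odd (m + n) ∧ (n = m + 1 ∨ n = m + 3)) ∨ (Even (m + n) ∧ n = m + 2) := by
  rw [Nat.odd_iff, Nat.even_iff]
  constructor
  · intro h
    have key := bplus_forward m n h
    omega
  · intro h
    have key : n = m + 1 ∨ n = m + 2 ∨ n = m + 3 := by omega
    rcases key with rfl | rfl | rfl
    · exact caseA m _ (Or.inl rfl)
    · exact caseA m _ (Or.inr rfl)
    · exact caseB m
end

section
/- Let B*(m, n), with m ≤ n, be the negative homogeneous signed bistar consisting of adjacent vertices u and v, m pendant vertices adjacent to u, and n pendant vertices adjacent to v, where every edge (including uv) is negative. Then B*(m, n) is a parity signed graph if and only if n = m or n = m + 1. -/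
lemma card_odd_Icc (N : ℕ) :
    ((Finset.Icc 1 N).filter (fun x => x % 2 = 1)).card = (N+1)/2 := by
  induction N with
  | zero => simp
  | succ n ih =>
    rw [← Finset.Ico_add_one_right_eq_Icc, ← Finset.insert_Ico_right_eq_Ico_add_one (by omega : 1 ≤ n + 1),
      Finset.Ico_add_one_right_eq_Icc, Finset.filter_insert]
    by_cases h : (n+1) % 2 = 1
    · rw [if_pos h, Finset.card_insert_of_notMem (by simp), ih]; omega
    · rw [if_neg h, ih]; omega

/-- The all-negative signed bistar `B*(m, n)` with `m ≤ n` is a parity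
signed graph iff `n = m` or `n = m + 1`. -/
theorem bistar_all_negative_parity_signed_iff (m n : ℕ) (hmn : m ≤ n) :
    IsParitySigned (bistar m n) (fun _ => False) ↔ n = m ∨ n = m + 1 := by
  have hcardV : Fintype.card (Fin (m+1) ⊕ Fin (n+1)) = m + n + 2 := by simp; omega
  constructor
  · rintro ⟨f, hbij, hpar⟩
    rw [hcardV] at hbij
    set N := m + n + 2 with hN
    have adjL : ∀ k : Fin (m+1), k ≠ 0 → (bistar m n).Adj (Sum.inl 0) (Sum.inl k) := by
      intro k hk
      simp [bistar, SimpleGraph.fromRel_adj]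
      exact fun h => hk h.symm
    have adjR : ∀ k : Fin (n+1), k ≠ 0 → (bistar m n).Adj (Sum.inr 0) (Sum.inr k) := by
      intro k hk
      simp [bistar, SimpleGraph.fromRel_adj]
      exact fun h => hk h.symm
    have adjC : (bistar m n).Adj (Sum.inl 0) (Sum.inr 0) := by
      simp [bistar, SimpleGraph.fromRel_adj]
    have hne : ∀ u v, (bistar m n).Adj u v → f u % 2 ≠ f v % 2 :=
      fun u v h => fun he => (hpar u v h).mpr he
    have hab : f (Sum.inl 0 : Fin (m+1) ⊕ Fin (n+1)) % 2 ≠ f (Sum.inr 0) % 2 :=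
      hne _ _ adjC
    set a := f (Sum.inl 0 : Fin (m+1) ⊕ Fin (n+1)) % 2 with ha
    have hSmem : ∀ v : Fin (m+1) ⊕ Fin (n+1), f v % 2 = a ↔
        (v = Sum.inl 0 ∨ ∃ k : Fin (n+1), k ≠ 0 ∧ v = Sum.inr k) := by
      rintro (k | k)
      · constructor
        · intro h
          by_cases hk : k = 0
          · exact Or.inl (by rw [hk])
          · exact absurd h.symm (hne _ _ (adjL k hk))
        · rintro (h | ⟨k', _, h⟩) <;> simp_all
      · constructor
        · intro h
          by_cases hk : k = 0
          · subst hk; exact absurd h.symm hab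
          · exact Or.inr ⟨k, hk, rfl⟩
        · rintro (h | ⟨k', hk', h⟩)
          · simp_all
          · have hkk : k' = k := by simpa using h.symm
            have h1 := hne _ _ (adjR k' hk')
            rw [hkk] at h1
            omega
    have hScard : (Finset.univ.filter (fun v => f v % 2 = a)).card = n + 1 := by
      have heq : Finset.univ.filter (fun v : Fin (m+1) ⊕ Fin (n+1) => f v % 2 = a) =
          insert (Sum.inl 0) ((Finset.univ.erase (0 : Fin (n+1))).image Sum.inr) := by
        ext v
        simp only [Finset.mem_filter, Finset.mem_univ, true_and, Finset.mem_insert,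
          Finset.mem_image, Finset.mem_erase]
        rw [hSmem v]
        aesop
      rw [heq, Finset.card_insert_of_notMem (by simp),
        Finset.card_image_of_injective _ Sum.inr_injective, Finset.card_erase_of_mem (by simp)]
      simp
    have hTcard : (Finset.univ.filter
        (fun v : Fin (m+1) ⊕ Fin (n+1) => f v % 2 = 1)).card = (N+1)/2 := by
      rw [← card_odd_Icc N]
      apply Finset.card_bij (fun v _ => f v)
      · intro v hv
        simp only [Finset.mem_filter, Finset.mem_univ, true_and] at hv ⊢
        have := hbij.1 (Set.mem_univ v)
        simp only [Set.mem_Icc] at this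
        exact ⟨Finset.mem_Icc.mpr this, hv⟩
      · intro u _ v _ huv
        exact hbij.2.1 (Set.mem_univ u) (Set.mem_univ v) huv
      · intro x hx
        simp only [Finset.mem_filter, Finset.mem_Icc] at hx
        obtain ⟨v, _, hv⟩ := hbij.2.2 (Set.mem_Icc.mpr hx.1)
        exact ⟨v, by simp [hv, hx.2], hv⟩
    have hcardU : (Finset.univ : Finset (Fin (m+1) ⊕ Fin (n+1))).card = N := by
      simpa using hcardV
    have ha2 : a = 0 ∨ a = 1 := by omega
    rcases ha2 with h0 | h1
    · have := Finset.card_filter_add_card_filter_not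
        (s := (Finset.univ : Finset (Fin (m+1) ⊕ Fin (n+1))))
        (p := fun v => f v % 2 = 1)
      have heq : Finset.univ.filter (fun v : Fin (m+1) ⊕ Fin (n+1) => ¬ f v % 2 = 1) =
          Finset.univ.filter (fun v => f v % 2 = a) := by
        apply Finset.filter_congr; intro v _; simp only [h0]; omega
      rw [hTcard, heq, hScard, hcardU] at this
      omega
    · rw [h1] at hScard
      rw [hScard] at hTcard
      omega
  · intro hcase
    have hn1 : n ≤ m + 1 := by omega
    refine ⟨Sum.elim (fun k : Fin (m+1) => if k = 0 then 1 else 2 * (k:ℕ) + 2)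
      (fun k : Fin (n+1) => if k = 0 then 2 else 2 * (k:ℕ) + 1), ?_, ?_⟩
    · rw [hcardV]
      refine ⟨?_, ?_, ?_⟩
      · rintro (k | k) -
        · rcases eq_or_ne k 0 with rfl | hk
          · rw [Sum.elim_inl, if_pos rfl]; exact Set.mem_Icc.mpr (by omega)
          · have hlt := k.isLt
            rw [Sum.elim_inl, if_neg hk]; exact Set.mem_Icc.mpr (by omega)
        · rcases eq_or_ne k 0 with rfl | hk
          · rw [Sum.elim_inr, if_pos rfl]; exact Set.mem_Icc.mpr (by omega)
          · have hlt := k.isLt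
            rw [Sum.elim_inr, if_neg hk]; exact Set.mem_Icc.mpr (by omega)
      · rintro (j | j) - (k | k) - h <;>
          simp only [Sum.elim_inl, Sum.elim_inr] at h
        · rcases eq_or_ne j 0 with rfl | hj <;> rcases eq_or_ne k 0 with rfl | hk
          · rfl
          · rw [if_pos rfl, if_neg hk] at h; exact absurd h (by omega)
          · rw [if_neg hj, if_pos rfl] at h; exact absurd h (by omega)
          · rw [if_neg hj, if_neg hk] at h
            exact congrArg Sum.inl (Fin.ext (by omega))
        · have hj' : (j:ℕ) ≠ 0 → j ≠ 0 := fun h1 h2 => h1 (by rw [h2]; rfl)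
          rcases eq_or_ne j 0 with rfl | hj <;> rcases eq_or_ne k 0 with rfl | hk
          · rw [if_pos rfl, if_pos rfl] at h; exact absurd h (by omega)
          · have hk' : (k:ℕ) ≠ 0 := fun hc => hk (Fin.ext hc)
            rw [if_pos rfl, if_neg hk] at h; exact absurd h (by omega)
          · have hj'' : (j:ℕ) ≠ 0 := fun hc => hj (Fin.ext hc)
            rw [if_neg hj, if_pos rfl] at h; exact absurd h (by omega)
          · rw [if_neg hj, if_neg hk] at h; exact absurd h (by omega)
        · rcases eq_or_ne j 0 with rfl | hj <;> rcases eq_or_ne k 0 with rfl | hk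
          · rw [if_pos rfl, if_pos rfl] at h; exact absurd h (by omega)
          · have hk' : (k:ℕ) ≠ 0 := fun hc => hk (Fin.ext hc)
            rw [if_pos rfl, if_neg hk] at h; exact absurd h (by omega)
          · have hj'' : (j:ℕ) ≠ 0 := fun hc => hj (Fin.ext hc)
            rw [if_neg hj, if_pos rfl] at h; exact absurd h (by omega)
          · rw [if_neg hj, if_neg hk] at h; exact absurd h (by omega)
        · rcases eq_or_ne j 0 with rfl | hj <;> rcases eq_or_ne k 0 with rfl | hk
          · rfl
          · have hk' : (k:ℕ) ≠ 0 := fun hc => hk (Fin.ext hc)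
            rw [if_pos rfl, if_neg hk] at h; exact absurd h (by omega)
          · have hj'' : (j:ℕ) ≠ 0 := fun hc => hj (Fin.ext hc)
            rw [if_neg hj, if_pos rfl] at h; exact absurd h (by omega)
          · rw [if_neg hj, if_neg hk] at h
            exact congrArg Sum.inr (Fin.ext (by omega))
      · rintro x ⟨hx1, hx2⟩
        by_cases h1 : x = 1
        · exact ⟨Sum.inl 0, Set.mem_univ _, by simp [h1]⟩
        by_cases h2 : x = 2
        · exact ⟨Sum.inr 0, Set.mem_univ _, by simp [h2]⟩
        by_cases ho : x % 2 = 1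
        · refine ⟨Sum.inr ⟨x / 2, by omega⟩, Set.mem_univ _, ?_⟩
          have hz : (⟨x / 2, by omega⟩ : Fin (n+1)) ≠ 0 := by
            simp only [ne_eq, Fin.ext_iff, Fin.val_zero]; omega
          rw [Sum.elim_inr, if_neg hz]
          show 2 * (x / 2) + 1 = x
          omega
        · refine ⟨Sum.inl ⟨x / 2 - 1, by omega⟩, Set.mem_univ _, ?_⟩
          have hz : (⟨x / 2 - 1, by omega⟩ : Fin (m+1)) ≠ 0 := by
            simp only [ne_eq, Fin.ext_iff, Fin.val_zero]; omega
          rw [Sum.elim_inl, if_neg hz]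
          show 2 * (x / 2 - 1) + 2 = x
          omega
    · intro u v hadj
      simp only [false_iff]
      have h := hadj
      simp only [bistar, SimpleGraph.fromRel_adj] at h
      obtain ⟨hne, hrel⟩ := h
      rcases hrel with (⟨rfl, k, rfl⟩ | ⟨rfl, k, rfl⟩ | ⟨rfl, rfl⟩) |
        (⟨rfl, k, rfl⟩ | ⟨rfl, k, rfl⟩ | ⟨rfl, rfl⟩)
      · have hk : k ≠ 0 := fun h => hne (by rw [h])
        rw [Sum.elim_inl, Sum.elim_inl, if_pos rfl, if_neg hk]; omega
      · have hk : k ≠ 0 := fun h => hne (by rw [h])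
        rw [Sum.elim_inr, Sum.elim_inr, if_pos rfl, if_neg hk]; omega
      · rw [Sum.elim_inl, Sum.elim_inr, if_pos rfl, if_pos rfl]; omega
      · have hk : k ≠ 0 := fun h => hne (by rw [h])
        rw [Sum.elim_inl, Sum.elim_inl, if_neg hk, if_pos rfl]; omega
      · have hk : k ≠ 0 := fun h => hne (by rw [h])
        rw [Sum.elim_inr, Sum.elim_inr, if_neg hk, if_pos rfl]; omega
      · rw [Sum.elim_inr, Sum.elim_inl, if_pos rfl, if_pos rfl]; omega
end

section
/- For every n ≥ 2, the rna number of the path P_n on n vertices equals 1, and the adhika number of P_n equals n − 2; that is, over all bijections f : V(P_n) → {1, …, n}, the minimum number of edges with opposite-parity labels is 1 and the maximum number of edges with same-parity labels is n − 2. -/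
open Fin.NatCast

open Finset in
private lemma pathCount {n : ℕ} [NeZero n] (p : Sym2 (Fin n) → Prop) [DecidablePred p] :
    {e ∈ (SimpleGraph.pathGraph n).edgeSet | p e}.ncard =
      ((Finset.range (n-1)).filter (fun i : ℕ => p s(((i : Fin n)), ((i+1 : ℕ) : Fin n)))).card := by
  have hval : ∀ i : ℕ, i < n → ((i : Fin n) : ℕ) = i := fun i h => Fin.val_cast_of_lt h
  have hset : {e ∈ (SimpleGraph.pathGraph n).edgeSet | p e} =
      ↑(((Finset.range (n-1)).filter (fun i : ℕ => p s(((i : Fin n)), ((i+1 : ℕ) : Fin n)))).image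
        (fun i : ℕ => s(((i : Fin n)), ((i+1 : ℕ) : Fin n)))) := by
    ext e
    simp only [Set.mem_setOf_eq, Finset.coe_image, Set.mem_image, Finset.mem_coe,
      Finset.mem_filter, Finset.mem_range]
    constructor
    · intro ⟨he, hp⟩
      induction e using Sym2.ind with
      | _ u v =>
        rw [SimpleGraph.mem_edgeSet, SimpleGraph.pathGraph_adj] at he
        have hu := u.isLt
        have hv := v.isLt
        rcases he with h | h
        · have h1 : ((u.val : ℕ) : Fin n) = u := Fin.cast_val_eq_self u
          have h2 : ((u.val + 1 : ℕ) : Fin n) = v := by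
            apply Fin.ext; rw [hval _ (by omega)]; exact h
          refine ⟨u.val, ⟨by omega, ?_⟩, ?_⟩
          · rw [h1, h2]; exact hp
          · rw [h1, h2]
        · have h1 : ((v.val : ℕ) : Fin n) = v := Fin.cast_val_eq_self v
          have h2 : ((v.val + 1 : ℕ) : Fin n) = u := by
            apply Fin.ext; rw [hval _ (by omega)]; exact h
          refine ⟨v.val, ⟨by omega, ?_⟩, ?_⟩
          · rw [h1, h2, Sym2.eq_swap]; exact hp
          · rw [h1, h2, Sym2.eq_swap]
    · rintro ⟨i, ⟨⟨hi, hp⟩, rfl⟩⟩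
      refine ⟨?_, hp⟩
      rw [SimpleGraph.mem_edgeSet, SimpleGraph.pathGraph_adj]
      left
      rw [hval _ (by omega), hval _ (by omega)]
  rw [hset, Set.ncard_coe_finset, Finset.card_image_of_injOn]
  intro a ha b hb hab
  simp only [Finset.coe_filter, Set.mem_setOf_eq, Finset.mem_range] at ha hb
  rw [Sym2.eq_iff] at hab
  rcases hab with ⟨h1, h2⟩ | ⟨h1, h2⟩
  · have e1 := congrArg Fin.val h1
    rw [hval _ (by omega), hval _ (by omega)] at e1
    exact e1
  · have e1 := congrArg Fin.val h1
    have e2 := congrArg Fin.val h2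
    rw [hval _ (by omega), hval _ (by omega)] at e1
    rw [hval _ (by omega), hval _ (by omega)] at e2
    omega

/-- For `n ≥ 2`, the rna number of the path `P_n` is `1` and its
adhika number is `n - 2`. -/
theorem rna_adhika_path (n : ℕ) (hn : 2 ≤ n) :
    rnaNumber (SimpleGraph.pathGraph n) = 1 ∧
      adhikaNumber (SimpleGraph.pathGraph n) = n - 2 := by
  classical
  haveI : NeZero n := ⟨by omega⟩
  have hval : ∀ i : ℕ, i < n → ((i : Fin n) : ℕ) = i := fun i h => Fin.val_cast_of_lt h
  set G := SimpleGraph.pathGraph n with hG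
  -- counts as filters
  have hneg : ∀ f : Fin n → ℕ, negCount G f =
      ((Finset.range (n-1)).filter
        (fun i : ℕ => diffParity f s(((i : Fin n)), ((i+1 : ℕ) : Fin n)))).card := by
    intro f; exact pathCount (diffParity f)
  have hpos : ∀ f : Fin n → ℕ, posCount G f =
      ((Finset.range (n-1)).filter
        (fun i : ℕ => ¬ diffParity f s(((i : Fin n)), ((i+1 : ℕ) : Fin n)))).card := by
    intro f; exact pathCount (fun e => ¬ diffParity f e)
  -- total
  have htot : ∀ f : Fin n → ℕ, negCount G f + posCount G f = n - 1 := by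
    intro f
    rw [hneg f, hpos f, Finset.card_filter_add_card_filter_not, Finset.card_range]
  -- lower bound: every bijective labelling has at least one negative edge
  have hlow : ∀ f : Fin n → ℕ,
      Set.BijOn f Set.univ (Set.Icc 1 (Fintype.card (Fin n))) → 1 ≤ negCount G f := by
    intro f hf
    by_contra hc
    push_neg at hc
    interval_cases h : negCount G f
    rw [hneg f, Finset.card_eq_zero, Finset.filter_eq_empty_iff] at h
    have hsame : ∀ m : ℕ, m < n → f ((m : Fin n)) % 2 = f ((0 : ℕ) : Fin n) % 2 := by
      intro m
      induction m with
      | zero => intro _; rfl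
      | succ k ih =>
        intro hk
        have h1 := h (Finset.mem_range.mpr (show k < n - 1 by omega))
        simp only [diffParity, Sym2.lift_mk, ne_eq, not_not] at h1
        rw [← h1]
        exact ih (by omega)
    have hall : ∀ u : Fin n, f u % 2 = f ((0 : ℕ) : Fin n) % 2 := by
      intro u
      have := hsame u.val u.isLt
      rwa [Fin.cast_val_eq_self] at this
    simp only [Fintype.card_fin] at hf
    obtain ⟨u, -, hu⟩ := hf.surjOn (Set.mem_Icc.mpr ⟨le_refl 1, by omega⟩)
    obtain ⟨v, -, hv⟩ := hf.surjOn (Set.mem_Icc.mpr (show 1 ≤ 2 ∧ 2 ≤ n by omega))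
    have := (hall u).trans (hall v).symm
    rw [hu, hv] at this
    omega
  -- the optimal labelling
  set k := (n + 1) / 2 with hk
  set g : ℕ → ℕ := fun j => if j < k then 2*j+1 else 2*(j-k)+2 with hgdef
  set f₀ : Fin n → ℕ := fun i => g i.val with hf₀
  have hg : ∀ j : ℕ, j < n → (j < k → g j = 2*j+1) ∧ (k ≤ j → g j = 2*(j-k)+2) := by
    intro j _
    constructor
    · intro hj; simp only [hgdef, if_pos hj]
    · intro hj; simp only [hgdef, if_neg (by omega : ¬ j < k)]
  have hbij : Set.BijOn f₀ Set.univ (Set.Icc 1 (Fintype.card (Fin n))) := by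
    simp only [Fintype.card_fin]
    refine ⟨?_, ?_, ?_⟩
    · intro u _
      have hu := u.isLt
      simp only [hf₀, hgdef, Set.mem_Icc]
      split <;> omega
    · intro u _ v _ huv
      have hu := u.isLt
      have hv := v.isLt
      simp only [hf₀, hgdef] at huv
      apply Fin.ext
      split at huv <;> split at huv <;> omega
    · intro m hm
      rw [Set.mem_Icc] at hm
      rcases Nat.even_or_odd m with he | ho
      · obtain ⟨j, hj⟩ := he
        refine ⟨⟨k + (j - 1), by omega⟩, Set.mem_univ _, ?_⟩
        simp only [hf₀, hgdef, if_neg (by omega : ¬ (k + (j-1) < k))]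
        omega
      · obtain ⟨j, hj⟩ := ho
        refine ⟨⟨j, by omega⟩, Set.mem_univ _, ?_⟩
        simp only [hf₀, hgdef, if_pos (by omega : j < k)]
        omega
  have hnegf₀ : negCount G f₀ = 1 := by
    rw [hneg f₀]
    have : ((Finset.range (n-1)).filter
        (fun i : ℕ => diffParity f₀ s(((i : Fin n)), ((i+1 : ℕ) : Fin n)))) = {k - 1} := by
      ext i
      rw [Finset.mem_filter, Finset.mem_range, Finset.mem_singleton]
      simp only [Finset.mem_filter, Finset.mem_range, Finset.mem_singleton,
        diffParity, Sym2.lift_mk, ne_eq]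
      constructor
      · rintro ⟨hi, hd⟩
        simp only [hf₀, hgdef, hval i (by omega), hval (i+1) (by omega)] at hd
        by_contra hne
        apply hd
        split <;> split <;> omega
      · intro hi
        subst hi
        have hk1 : k - 1 < n - 1 := by omega
        refine ⟨hk1, ?_⟩
        simp only [hf₀, hgdef, hval (k-1) (by omega), hval (k-1+1) (by omega)]
        rw [if_pos (by omega), if_neg (by omega)]
        omega
    rw [this, Finset.card_singleton]
  have hposf₀ : posCount G f₀ = n - 2 := by
    have := htot f₀
    omega
  constructor
  · -- rna number
    show sInf {k | ∃ f : Fin n → ℕ,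
        Set.BijOn f Set.univ (Set.Icc 1 (Fintype.card (Fin n))) ∧ negCount G f = k} = 1
    have h1mem : 1 ∈ {k | ∃ f : Fin n → ℕ,
        Set.BijOn f Set.univ (Set.Icc 1 (Fintype.card (Fin n))) ∧ negCount G f = k} :=
      ⟨f₀, hbij, hnegf₀⟩
    refine le_antisymm (Nat.sInf_le h1mem) ?_
    obtain ⟨f, hf, hfc⟩ := Nat.sInf_mem (⟨1, h1mem⟩ : Set.Nonempty _)
    rw [← hfc]
    exact hlow f hf
  · -- adhika number
    show sSup {k | ∃ f : Fin n → ℕ,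
        Set.BijOn f Set.univ (Set.Icc 1 (Fintype.card (Fin n))) ∧ posCount G f = k} = n - 2
    have hmem : (n - 2) ∈ {k | ∃ f : Fin n → ℕ,
        Set.BijOn f Set.univ (Set.Icc 1 (Fintype.card (Fin n))) ∧ posCount G f = k} :=
      ⟨f₀, hbij, hposf₀⟩
    have hbd : ∀ m ∈ {k | ∃ f : Fin n → ℕ,
        Set.BijOn f Set.univ (Set.Icc 1 (Fintype.card (Fin n))) ∧ posCount G f = k}, m ≤ n - 2 := by
      rintro m ⟨f, hf, rfl⟩
      have := htot f
      have := hlow f hf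
      omega
    exact le_antisymm (csSup_le ⟨n - 2, hmem⟩ hbd) (le_csSup ⟨n - 2, hbd⟩ hmem)
end

section
/- For every n ≥ 3, the rna number of the cycle C_n on n vertices equals 2, and the adhika number of C_n equals n − 2; that is, over all bijections f : V(C_n) → {1, …, n}, the minimum number of edges with opposite-parity labels is 2 and the maximum number of edges with same-parity labels is n − 2. -/
section helpers

open Fin.NatCast Fin.CommRing

variable {n : ℕ} [NeZero n]

lemma fin_one_val (hn : 3 ≤ n) : (1 : Fin n).val = 1 := by
  rw [Fin.val_one']; exact Nat.mod_eq_of_lt (by omega)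

lemma cycle_edge_iff (hn : 3 ≤ n) (e : Sym2 (Fin n)) :
    e ∈ (SimpleGraph.cycleGraph n).edgeSet ↔ ∃ i : Fin n, e = s(i, i + 1) := by
  induction e with
  | _ u v =>
    rw [SimpleGraph.mem_edgeSet, SimpleGraph.cycleGraph_adj']
    constructor
    · rintro (h | h)
      · refine ⟨v, ?_⟩
        have : u - v = 1 := Fin.ext (by rw [h, fin_one_val hn])
        have hu : u = v + 1 := by rw [← this]; ring
        rw [hu]; exact Sym2.eq_swap
      · refine ⟨u, ?_⟩
        have : v - u = 1 := Fin.ext (by rw [h, fin_one_val hn])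
        have hv : v = u + 1 := by rw [← this]; ring
        rw [hv]
    · rintro ⟨i, hi⟩
      rw [Sym2.eq_iff] at hi
      rcases hi with ⟨rfl, rfl⟩ | ⟨rfl, rfl⟩
      · right; rw [add_sub_cancel_left, fin_one_val hn]
      · left; rw [add_sub_cancel_left, fin_one_val hn]

lemma edgemap_inj (hn : 3 ≤ n) : Function.Injective (fun i : Fin n => s(i, i + 1)) := by
  intro i j h
  simp only [Sym2.eq_iff] at h
  rcases h with ⟨h1, _⟩ | ⟨h1, h2⟩
  · exact h1
  · exfalso
    have h3 : i = i + 1 + 1 := by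
      conv_lhs => rw [h1, ← h2]
    rw [add_assoc] at h3
    have h4 : (1 + 1 : Fin n) = 0 := (left_eq_add.mp h3)
    have h5 : ((1 + 1 : Fin n)).val = 0 := by rw [h4]; rfl
    rw [Fin.val_add, fin_one_val hn, Nat.mod_eq_of_lt (by omega)] at h5
    omega

lemma negCount_eq (hn : 3 ≤ n) (f : Fin n → ℕ) :
    negCount (SimpleGraph.cycleGraph n) f =
      (Finset.univ.filter (fun i : Fin n => ¬ (f i % 2 = f (i + 1) % 2))).card := by
  have himg : {e ∈ (SimpleGraph.cycleGraph n).edgeSet | diffParity f e}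
      = (fun i : Fin n => s(i, i + 1)) ''
        ↑(Finset.univ.filter fun i : Fin n => ¬ (f i % 2 = f (i + 1) % 2)) := by
    ext e
    simp only [Set.mem_setOf_eq, Set.mem_image, Finset.coe_filter, Finset.mem_univ, true_and]
    constructor
    · rintro ⟨he, hd⟩
      obtain ⟨i, rfl⟩ := (cycle_edge_iff hn e).mp he
      refine ⟨i, ?_, rfl⟩
      simpa [diffParity] using hd
    · rintro ⟨i, hi, rfl⟩
      exact ⟨(cycle_edge_iff hn _).mpr ⟨i, rfl⟩, by simpa [diffParity] using hi⟩
  rw [negCount, himg, Set.ncard_image_of_injective _ (edgemap_inj hn), Set.ncard_coe_finset]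

lemma posCount_eq (hn : 3 ≤ n) (f : Fin n → ℕ) :
    posCount (SimpleGraph.cycleGraph n) f =
      (Finset.univ.filter (fun i : Fin n => f i % 2 = f (i + 1) % 2)).card := by
  have himg : {e ∈ (SimpleGraph.cycleGraph n).edgeSet | ¬ diffParity f e}
      = (fun i : Fin n => s(i, i + 1)) ''
        ↑(Finset.univ.filter fun i : Fin n => f i % 2 = f (i + 1) % 2) := by
    ext e
    simp only [Set.mem_setOf_eq, Set.mem_image, Finset.coe_filter, Finset.mem_univ, true_and]
    constructor
    · rintro ⟨he, hd⟩
      obtain ⟨i, rfl⟩ := (cycle_edge_iff hn e).mp he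
      refine ⟨i, ?_, rfl⟩
      simpa [diffParity] using hd
    · rintro ⟨i, hi, rfl⟩
      exact ⟨(cycle_edge_iff hn _).mpr ⟨i, rfl⟩, by simpa [diffParity] using hi⟩
  rw [posCount, himg, Set.ncard_image_of_injective _ (edgemap_inj hn), Set.ncard_coe_finset]

lemma two_le_D (hn : 3 ≤ n) (f : Fin n → ℕ)
    (hf : Set.BijOn f Set.univ (Set.Icc 1 n)) :
    2 ≤ (Finset.univ.filter (fun i : Fin n => ¬ (f i % 2 = f (i + 1) % 2))).card := by
  by_contra hlt
  push_neg at hlt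
  set D := Finset.univ.filter (fun i : Fin n => ¬ (f i % 2 = f (i + 1) % 2)) with hD
  obtain ⟨j, hj⟩ : ∃ j : Fin n, ∀ i : Fin n, i ≠ j → f i % 2 = f (i + 1) % 2 := by
    rcases D.eq_empty_or_nonempty with h | ⟨j, hjD⟩
    · refine ⟨0, fun i _ => ?_⟩
      by_contra hc
      have : i ∈ D := by simp [hD, hc]
      simp [h] at this
    · refine ⟨j, fun i hij => ?_⟩
      by_contra hc
      have hiD : i ∈ D := by simp [hD, hc]
      exact hij (Finset.card_le_one.mp (by omega) i hiD j hjD)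
  have key : ∀ k : ℕ, f (j + 1 + (k : Fin n)) % 2 = f (j + 1) % 2 := by
    intro k
    induction k with
    | zero => simp
    | succ k ih =>
      by_cases hc : j + 1 + (k : Fin n) = j
      · have h1 : j + 1 + ((k + 1 : ℕ) : Fin n) = j + 1 := by
          push_cast
          rw [← add_assoc, hc]
        rw [h1]
      · have step := hj _ hc
        have h1 : j + 1 + ((k + 1 : ℕ) : Fin n) = (j + 1 + (k : Fin n)) + 1 := by
          push_cast; ring
        rw [h1, ← step, ih]
  have hconst : ∀ v : Fin n, f v % 2 = f (j + 1) % 2 := by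
    intro v
    have : v = j + 1 + ((v - (j + 1)).val : Fin n) := by
      rw [Fin.cast_val_eq_self]; ring
    rw [this]
    exact key _
  obtain ⟨u, -, hu⟩ := hf.2.2 (Set.mem_Icc.mpr ⟨le_refl 1, by omega⟩)
  obtain ⟨w, -, hw⟩ := hf.2.2 (Set.mem_Icc.mpr (by omega : 1 ≤ 2 ∧ 2 ≤ n))
  have := (hconst u).trans (hconst w).symm
  rw [hu, hw] at this
  omega

lemma construction (hn : 3 ≤ n) :
    ∃ f : Fin n → ℕ, Set.BijOn f Set.univ (Set.Icc 1 n) ∧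
      (Finset.univ.filter (fun i : Fin n => ¬ (f i % 2 = f (i + 1) % 2))).card = 2 := by
  set m := (n + 1) / 2 with hm
  refine ⟨fun i => if i.val < m then 2 * i.val + 1 else 2 * (i.val - m) + 2, ?_, ?_⟩
  · refine ⟨?_, ?_, ?_⟩
    · intro i _
      simp only [Set.mem_Icc]
      have := i.isLt
      split_ifs with h <;> omega
    · intro a _ b _ hab
      have ha := a.isLt
      have hb := b.isLt
      apply Fin.ext
      simp only at hab
      split_ifs at hab <;> omega
    · intro k hk
      simp only [Set.mem_Icc] at hk
      rcases Nat.even_or_odd k with he | ho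
      · have hk2 : k % 2 = 0 := Nat.even_iff.mp he
        refine ⟨⟨m + (k - 2) / 2, by omega⟩, Set.mem_univ _, ?_⟩
        simp only
        rw [if_neg (by omega)]
        omega
      · have hk2 : k % 2 = 1 := Nat.odd_iff.mp ho
        refine ⟨⟨(k - 1) / 2, by omega⟩, Set.mem_univ _, ?_⟩
        simp only
        rw [if_pos (by omega)]
        omega
  · have hone : (1 : Fin n).val = 1 := fin_one_val hn
    have hDeq : (Finset.univ.filter
        (fun i : Fin n => ¬ ((if i.val < m then 2 * i.val + 1 else 2 * (i.val - m) + 2) % 2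
          = (if (i + 1).val < m then 2 * (i + 1).val + 1 else 2 * ((i + 1).val - m) + 2) % 2)))
        = {(⟨m - 1, by omega⟩ : Fin n), ⟨n - 1, by omega⟩} := by
      ext i
      have hiv := i.isLt
      have hv : (i + 1).val = (i.val + 1) % n := by rw [Fin.val_add, hone]
      simp only [Finset.mem_filter, Finset.mem_univ, true_and, Finset.mem_insert,
        Finset.mem_singleton, Fin.ext_iff]
      rcases Nat.lt_or_ge i.val (n - 1) with h | h
      · have hv' : (i + 1).val = i.val + 1 := by rw [hv, Nat.mod_eq_of_lt (by omega)]
        rw [hv']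
        split_ifs with h1 h2 h2 <;> omega
      · have hieq : i.val = n - 1 := by omega
        have hv' : (i + 1).val = 0 := by rw [hv, hieq]; simp [Nat.sub_add_cancel (by omega : 1 ≤ n)]
        rw [hv']
        split_ifs with h1 h2 h2 <;> omega
    rw [hDeq]
    rw [Finset.card_pair (by simp only [ne_eq, Fin.mk.injEq]; omega)]

end helpers


/-- For `n ≥ 3`, the rna number of the cycle `C_n` is `2` and its
adhika number is `n - 2`. -/
theorem rna_adhika_cycle (n : ℕ) (hn : 3 ≤ n) :
    rnaNumber (SimpleGraph.cycleGraph n) = 2 ∧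
      adhikaNumber (SimpleGraph.cycleGraph n) = n - 2 := by
  haveI : NeZero n := ⟨by omega⟩
  have hcard : Fintype.card (Fin n) = n := Fintype.card_fin n
  obtain ⟨f0, hf0, hD0⟩ := construction hn
  have hsum : ∀ f : Fin n → ℕ,
      (Finset.univ.filter (fun i : Fin n => f i % 2 = f (i + 1) % 2)).card
      + (Finset.univ.filter (fun i : Fin n => ¬ (f i % 2 = f (i + 1) % 2))).card = n := by
    intro f
    rw [Finset.card_filter_add_card_filter_not]
    simp
  constructor
  · have h2mem : 2 ∈ {k | ∃ f : Fin n → ℕ,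
        Set.BijOn f Set.univ (Set.Icc 1 (Fintype.card (Fin n)))
        ∧ negCount (SimpleGraph.cycleGraph n) f = k} := by
      refine ⟨f0, by rwa [hcard], ?_⟩
      rw [negCount_eq hn, hD0]
    refine le_antisymm (Nat.sInf_le h2mem) (le_csInf ⟨2, h2mem⟩ ?_)
    rintro k ⟨f, hf, rfl⟩
    rw [hcard] at hf
    rw [negCount_eq hn]
    exact two_le_D hn f hf
  · have hmem : (n - 2) ∈ {k | ∃ f : Fin n → ℕ,
        Set.BijOn f Set.univ (Set.Icc 1 (Fintype.card (Fin n)))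
        ∧ posCount (SimpleGraph.cycleGraph n) f = k} := by
      refine ⟨f0, by rwa [hcard], ?_⟩
      rw [posCount_eq hn]
      have := hsum f0
      omega
    apply IsGreatest.csSup_eq
    refine ⟨hmem, ?_⟩
    rintro k ⟨f, hf, rfl⟩
    rw [hcard] at hf
    rw [posCount_eq hn]
    have h1 := hsum f
    have h2 := two_le_D hn f hf
    omega
end

section
/- For a path P_n with n ≥ 2, the rna number equals the adhika number (σ⁻(P_n) = σ⁺(P_n)) if and only if n = 3; and for a cycle C_n with n ≥ 3, σ⁻(C_n) = σ⁺(C_n) if and only if n = 4. -/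
open SimpleGraph

/-! ### Auxiliary lemmas -/

section Generic

variable {V : Type*} [Fintype V] {G : SimpleGraph V} {k : ℕ}

lemma negCount_add_posCount (G : SimpleGraph V) (f : V → ℕ) :
    negCount G f + posCount G f = G.edgeSet.ncard := by
  rw [negCount, posCount, ← Set.ncard_union_eq ?_ (Set.toFinite _) (Set.toFinite _)]
  · congr 1
    ext e
    simp only [Set.mem_union, Set.mem_sep_iff]
    tauto
  · rw [Set.disjoint_left]
    rintro e ⟨_, h1⟩ ⟨_, h2⟩
    exact h2 h1

lemma adhika_eq (hne : ∃ f : V → ℕ, Set.BijOn f Set.univ (Set.Icc 1 (Fintype.card V))) :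
    adhikaNumber G = G.edgeSet.ncard - rnaNumber G := by
  obtain ⟨f, hf⟩ := hne
  set Sm := {k | ∃ f : V → ℕ, Set.BijOn f Set.univ (Set.Icc 1 (Fintype.card V)) ∧ negCount G f = k}
    with hSm
  set Sp := {k | ∃ f : V → ℕ, Set.BijOn f Set.univ (Set.Icc 1 (Fintype.card V)) ∧ posCount G f = k}
    with hSp
  have hmne : Sm.Nonempty := ⟨_, f, hf, rfl⟩
  have hpne : Sp.Nonempty := ⟨_, f, hf, rfl⟩
  have hbdd : BddAbove Sp := by
    refine ⟨G.edgeSet.ncard, ?_⟩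
    rintro k ⟨g, hg, rfl⟩
    exact Set.ncard_le_ncard (fun e he => he.1) (Set.toFinite _)
  obtain ⟨f₀, hf₀, hf₀n⟩ := Nat.sInf_mem hmne
  obtain ⟨f₁, hf₁, hf₁p⟩ := Nat.sSup_mem hpne hbdd
  have h0 := negCount_add_posCount G f₀
  have h1 := negCount_add_posCount G f₁
  have hle : rnaNumber G ≤ negCount G f₁ := Nat.sInf_le ⟨f₁, hf₁, rfl⟩
  have hge : adhikaNumber G ≥ posCount G f₀ := le_csSup hbdd ⟨f₀, hf₀, rfl⟩
  have e0 : rnaNumber G = negCount G f₀ := hf₀n.symm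
  have e1 : adhikaNumber G = posCount G f₁ := hf₁p.symm
  omega

lemma rna_eq (hub : ∃ f : V → ℕ, Set.BijOn f Set.univ (Set.Icc 1 (Fintype.card V)) ∧
      negCount G f ≤ k)
    (hlb : ∀ f : V → ℕ, Set.BijOn f Set.univ (Set.Icc 1 (Fintype.card V)) → k ≤ negCount G f) :
    rnaNumber G = k := by
  obtain ⟨f, hf, hfk⟩ := hub
  have h1 : rnaNumber G ≤ k := le_trans (Nat.sInf_le ⟨f, hf, rfl⟩) hfk
  obtain ⟨f₀, hf₀, hf₀n⟩ := Nat.sInf_mem (⟨_, f, hf, rfl⟩ :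
    Set.Nonempty {m | ∃ f : V → ℕ, Set.BijOn f Set.univ (Set.Icc 1 (Fintype.card V)) ∧ negCount G f = m})
  have h2 : k ≤ rnaNumber G := by rw [rnaNumber, ← hf₀n]; exact hlb f₀ hf₀
  omega

lemma one_le_negCount (hG : G.Preconnected) (hcard : 2 ≤ Fintype.card V) {f : V → ℕ}
    (hf : Set.BijOn f Set.univ (Set.Icc 1 (Fintype.card V))) : 1 ≤ negCount G f := by
  by_contra h
  have h0 : negCount G f = 0 := by omega
  rw [negCount, Set.ncard_eq_zero (Set.toFinite _)] at h0
  have hpos : ∀ u v : V, G.Adj u v → f u % 2 = f v % 2 := by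
    intro u v huv
    by_contra hne
    exact Set.eq_empty_iff_forall_notMem.mp h0 s(u, v) ⟨huv, hne⟩
  obtain ⟨u, -, hu⟩ := hf.surjOn (by simp [Set.mem_Icc]; omega : (1:ℕ) ∈ Set.Icc 1 (Fintype.card V))
  obtain ⟨v, -, hv⟩ := hf.surjOn (by simp [Set.mem_Icc]; omega : (2:ℕ) ∈ Set.Icc 1 (Fintype.card V))
  have key : ∀ {a b : V}, G.Reachable a b → f a % 2 = f b % 2 := by
    intro a b hab
    obtain ⟨p⟩ := hab
    induction p with
    | nil => rfl
    | cons h p ih => exact (hpos _ _ h).trans ih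
  have := key (hG u v)
  rw [hu, hv] at this
  omega

end Generic

/-! ### The standard labelling -/

def stdLabel (n : ℕ) (i : Fin n) : ℕ :=
  if i.val < (n+1)/2 then 2 * i.val + 1 else 2 * (i.val - (n+1)/2) + 2

lemma stdLabel_bijOn (n : ℕ) : Set.BijOn (stdLabel n) Set.univ (Set.Icc 1 n) := by
  refine ⟨?_, ?_, ?_⟩
  · intro i _
    simp only [stdLabel, Set.mem_Icc]
    have := i.isLt
    split <;> omega
  · intro i _ j _ h
    have hi := i.isLt; have hj := j.isLt
    simp only [stdLabel] at h
    apply Fin.ext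
    split_ifs at h <;> omega
  · intro k hk
    simp only [Set.mem_Icc] at hk
    by_cases h2 : k % 2 = 1
    · refine ⟨⟨(k-1)/2, by omega⟩, Set.mem_univ _, ?_⟩
      simp only [stdLabel]
      split <;> omega
    · refine ⟨⟨(n+1)/2 + (k-2)/2, by omega⟩, Set.mem_univ _, ?_⟩
      simp only [stdLabel]
      split <;> omega

lemma stdLabel_mod (n : ℕ) (i : Fin n) :
    stdLabel n i % 2 = if i.val < (n+1)/2 then 1 else 0 := by
  simp only [stdLabel]; split <;> omega

/-! ### Path edges -/

def pathEdge {m : ℕ} (i : Fin m) : Sym2 (Fin (m+1)) := s(i.castSucc, i.succ)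

lemma pathGraph_edgeSet (m : ℕ) :
    (pathGraph (m+1)).edgeSet = pathEdge '' Set.univ := by
  ext e
  induction e using Sym2.ind with
  | _ u v =>
    simp only [mem_edgeSet, pathGraph_adj, Set.image_univ, Set.mem_range]
    constructor
    · rintro (h | h)
      · exact ⟨⟨u.val, by omega⟩, by simp [pathEdge, Sym2.eq_iff, Fin.ext_iff]; omega⟩
      · exact ⟨⟨v.val, by omega⟩, by simp [pathEdge, Sym2.eq_iff, Fin.ext_iff]; omega⟩
    · rintro ⟨i, hi⟩
      simp only [pathEdge, Sym2.eq_iff, Fin.ext_iff, Fin.coe_castSucc, Fin.val_succ] at hi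
      omega

lemma pathEdge_injective (m : ℕ) : Function.Injective (pathEdge (m := m)) := by
  intro i j h
  simp only [pathEdge, Sym2.eq_iff, Fin.ext_iff, Fin.coe_castSucc, Fin.val_succ] at h
  apply Fin.ext
  omega

lemma pathGraph_ncard (m : ℕ) : (pathGraph (m+1)).edgeSet.ncard = m := by
  rw [pathGraph_edgeSet, Set.ncard_image_of_injective _ (pathEdge_injective m),
    Set.ncard_univ, Nat.card_eq_fintype_card, Fintype.card_fin]

/-! ### Cycle edges -/

lemma fin_val_one {n : ℕ} [NeZero n] (hn : 2 ≤ n) : (1 : Fin n).val = 1 := by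
  rw [Fin.val_one']; exact Nat.mod_eq_of_lt (by omega)

lemma fin_val_add_one {n : ℕ} [NeZero n] (hn : 2 ≤ n) (i : Fin n) :
    (i + 1).val = if i.val + 1 = n then 0 else i.val + 1 := by
  rw [Fin.val_add_eq_ite, fin_val_one hn]
  have := i.isLt
  split_ifs <;> omega

def cycEdge {n : ℕ} [NeZero n] (i : Fin n) : Sym2 (Fin n) := s(i, i+1)

lemma cycleGraph_edgeSet {n : ℕ} [NeZero n] (hn : 2 ≤ n) :
    (cycleGraph n).edgeSet = cycEdge '' Set.univ := by
  ext e
  induction e using Sym2.ind with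
  | _ u v =>
    simp only [mem_edgeSet, cycleGraph_adj', Set.image_univ, Set.mem_range]
    constructor
    · rintro (h | h)
      · refine ⟨v, ?_⟩
        have h1 : u - v = 1 := by apply Fin.ext; rw [fin_val_one hn]; exact h
        have h2 : v + (u - v) = u := by abel
        rw [h1] at h2
        rw [cycEdge, h2, Sym2.eq_swap]
      · refine ⟨u, ?_⟩
        have h1 : v - u = 1 := by apply Fin.ext; rw [fin_val_one hn]; exact h
        have h2 : u + (v - u) = v := by abel
        rw [h1] at h2
        rw [cycEdge, h2]
    · rintro ⟨i, hi⟩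
      rw [cycEdge, Sym2.eq_iff] at hi
      rcases hi with ⟨rfl, rfl⟩ | ⟨rfl, rfl⟩
      · right; rw [add_sub_cancel_left, fin_val_one hn]
      · left; rw [add_sub_cancel_left, fin_val_one hn]

lemma cycEdge_injective {n : ℕ} [NeZero n] (hn : 3 ≤ n) :
    Function.Injective (cycEdge (n := n)) := by
  intro i j h
  simp only [cycEdge, Sym2.eq_iff] at h
  rcases h with ⟨h1, -⟩ | ⟨h1, h2⟩
  · exact h1
  · exfalso
    have hii : i + 1 + 1 = i := by rw [h2, h1]
    have e1 := fin_val_add_one (by omega : 2 ≤ n) i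
    have e2 := fin_val_add_one (by omega : 2 ≤ n) (i + 1)
    have h3 := congrArg Fin.val hii
    rw [e2, e1] at h3
    have := i.isLt
    split_ifs at h3 <;> omega

lemma cycleGraph_ncard {n : ℕ} (hn : 3 ≤ n) : (cycleGraph n).edgeSet.ncard = n := by
  haveI : NeZero n := ⟨by omega⟩
  rw [cycleGraph_edgeSet (by omega), Set.ncard_image_of_injective _ (cycEdge_injective hn),
    Set.ncard_univ, Nat.card_eq_fintype_card, Fintype.card_fin]

/-! ### Upper bounds for the standard labelling -/

lemma negCount_path_le {n : ℕ} (hn : 2 ≤ n) : negCount (pathGraph n) (stdLabel n) ≤ 1 := by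
  have hc : (n+1)/2 < n := by omega
  have hsub : {e ∈ (pathGraph n).edgeSet | diffParity (stdLabel n) e} ⊆
      {s((⟨(n+1)/2 - 1, by omega⟩ : Fin n), (⟨(n+1)/2, hc⟩ : Fin n))} := by
    intro e he
    obtain ⟨he1, he2⟩ := he
    revert he1 he2
    induction e using Sym2.ind with
    | _ u v =>
      intro he1 he2
      rw [mem_edgeSet, pathGraph_adj] at he1
      have he2' : stdLabel n u % 2 ≠ stdLabel n v % 2 := he2
      have hu := stdLabel_mod n u
      have hv := stdLabel_mod n v
      have hiu := u.isLt; have hiv := v.isLt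
      simp only [Set.mem_singleton_iff, Sym2.eq_iff, Fin.ext_iff]
      split_ifs at hu hv <;> omega
  calc negCount (pathGraph n) (stdLabel n)
      ≤ _ := Set.ncard_le_ncard hsub (Set.finite_singleton _)
    _ = 1 := Set.ncard_singleton _

lemma negCount_cycle_le {n : ℕ} (hn : 3 ≤ n) : negCount (cycleGraph n) (stdLabel n) ≤ 2 := by
  haveI : NeZero n := ⟨by omega⟩
  have hc : (n+1)/2 < n := by omega
  have hsub : {e ∈ (cycleGraph n).edgeSet | diffParity (stdLabel n) e} ⊆
      {s((⟨(n+1)/2 - 1, by omega⟩ : Fin n), (⟨(n+1)/2, hc⟩ : Fin n)),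
       s((⟨n - 1, by omega⟩ : Fin n), (⟨0, by omega⟩ : Fin n))} := by
    rintro e ⟨he1, he2⟩
    rw [cycleGraph_edgeSet (by omega), Set.image_univ, Set.mem_range] at he1
    obtain ⟨i, rfl⟩ := he1
    have he2' : stdLabel n i % 2 ≠ stdLabel n (i+1) % 2 := he2
    have hu := stdLabel_mod n i
    have hv := stdLabel_mod n (i+1)
    have hadd := fin_val_add_one (by omega : 2 ≤ n) i
    have hiu := i.isLt
    simp only [Set.mem_insert_iff, Set.mem_singleton_iff, cycEdge, Sym2.eq_iff, Fin.ext_iff]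
    split_ifs at hu hv hadd <;> omega
  calc negCount (cycleGraph n) (stdLabel n)
      ≤ _ := Set.ncard_le_ncard hsub ((Set.finite_singleton _).insert _)
    _ ≤ 2 := by
        apply le_trans (Set.ncard_insert_le _ _)
        rw [Set.ncard_singleton]

/-! ### Evenness of negative edges on a cycle -/

lemma negCount_cycle_even {n : ℕ} (hn : 3 ≤ n) (f : Fin n → ℕ) :
    Even (negCount (cycleGraph n) f) := by
  haveI : NeZero n := ⟨by omega⟩
  classical
  have hset : {e ∈ (cycleGraph n).edgeSet | diffParity f e} =
      cycEdge '' {i : Fin n | f i % 2 ≠ f (i+1) % 2} := by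
    ext e
    simp only [Set.mem_sep_iff, Set.mem_image, Set.mem_setOf_eq]
    constructor
    · rintro ⟨he, hd⟩
      rw [cycleGraph_edgeSet (by omega), Set.image_univ, Set.mem_range] at he
      obtain ⟨i, rfl⟩ := he
      exact ⟨i, hd, rfl⟩
    · rintro ⟨i, hi, rfl⟩
      refine ⟨?_, hi⟩
      rw [cycleGraph_edgeSet (by omega), Set.image_univ]
      exact Set.mem_range_self i
  rw [negCount, hset, Set.ncard_image_of_injective _ (cycEdge_injective hn)]
  have hco : {i : Fin n | f i % 2 ≠ f (i+1) % 2} =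
      ↑(Finset.univ.filter fun i : Fin n => f i % 2 ≠ f (i+1) % 2) := by
    ext i; simp
  rw [hco, Set.ncard_coe_finset]
  have key : (((Finset.univ.filter fun i : Fin n => f i % 2 ≠ f (i+1) % 2).card : ℕ) : ZMod 2)
      = 0 := by
    rw [← Finset.sum_boole]
    have hterm : ∀ i : Fin n, (if f i % 2 ≠ f (i+1) % 2 then (1 : ZMod 2) else 0)
        = ((f (i+1) % 2 : ℕ) : ZMod 2) - ((f i % 2 : ℕ) : ZMod 2) := by
      intro i
      have h1 : f i % 2 = 0 ∨ f i % 2 = 1 := by omega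
      have h2 : f (i+1) % 2 = 0 ∨ f (i+1) % 2 = 1 := by omega
      rcases h1 with h1 | h1 <;> rcases h2 with h2 | h2 <;>
        rw [h1, h2] <;> simp <;> decide
    rw [Finset.sum_congr rfl fun i _ => hterm i, Finset.sum_sub_distrib]
    have hsum : ∑ i : Fin n, ((f (i+1) % 2 : ℕ) : ZMod 2)
        = ∑ i : Fin n, ((f i % 2 : ℕ) : ZMod 2) :=
      Fintype.sum_equiv (Equiv.addRight 1) _ _ (fun i => rfl)
    rw [hsum, sub_self]
  have := (ZMod.natCast_eq_zero_iff _ 2).mp key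
  exact (even_iff_two_dvd).mpr this


/-- For `n ≥ 2`, `σ⁻(P_n) = σ⁺(P_n)` iff `n = 3`; and for `n ≥ 3`,
`σ⁻(C_n) = σ⁺(C_n)` iff `n = 4`. -/
theorem rna_eq_adhika_iff (n : ℕ) :
    (2 ≤ n →
      (rnaNumber (SimpleGraph.pathGraph n) = adhikaNumber (SimpleGraph.pathGraph n) ↔
        n = 3)) ∧
    (3 ≤ n →
      (rnaNumber (SimpleGraph.cycleGraph n) = adhikaNumber (SimpleGraph.cycleGraph n) ↔
        n = 4)) := by
  constructor
  · intro hn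
    obtain ⟨m, rfl⟩ : ∃ m, n = m + 1 := ⟨n - 1, by omega⟩
    have hE : (pathGraph (m+1)).edgeSet.ncard = m := pathGraph_ncard m
    have hbij : Set.BijOn (stdLabel (m+1)) Set.univ (Set.Icc 1 (Fintype.card (Fin (m+1)))) := by
      simpa [Fintype.card_fin] using stdLabel_bijOn (m+1)
    have hrna : rnaNumber (pathGraph (m+1)) = 1 := by
      apply rna_eq ⟨stdLabel (m+1), hbij, negCount_path_le hn⟩
      intro f hf
      exact one_le_negCount (pathGraph_preconnected _) (by simp [Fintype.card_fin]; omega) hf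
    have hadh := adhika_eq (G := pathGraph (m+1)) ⟨_, hbij⟩
    rw [hrna, hE] at hadh
    rw [hrna, hadh]
    omega
  · intro hn
    have hE : (cycleGraph n).edgeSet.ncard = n := cycleGraph_ncard hn
    have hbij : Set.BijOn (stdLabel n) Set.univ (Set.Icc 1 (Fintype.card (Fin n))) := by
      simpa [Fintype.card_fin] using stdLabel_bijOn n
    have hrna : rnaNumber (cycleGraph n) = 2 := by
      apply rna_eq ⟨stdLabel n, hbij, negCount_cycle_le hn⟩
      intro f hf
      have h1 := one_le_negCount cycleGraph_preconnected
        (by simp [Fintype.card_fin]; omega) hf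
      obtain ⟨r, hr⟩ := negCount_cycle_even hn f
      omega
    have hadh := adhika_eq (G := cycleGraph n) ⟨_, hbij⟩
    rw [hrna, hE] at hadh
    rw [hrna, hadh]
    omega
end
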